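/- arXiv:1704.03491 — 7 statements merged into one kernel-verified Lean document; each statement's English description precedes it below -/
import Mathlib

section
/- Let ω be a non-principal ultrafilter on ℕ and Γ a group. Suppose that for every natural number n and every subset S of the free group F_n on n generators, there is a finite subset S_0 ⊆ S with V_Γ(S_0) = V_Γ(S). Then for any finitely generated group G and any sequence of homomorphisms (φ_i : G → Γ), the homomorphism φ_i factors through the quotient map φ_∞ : G → G/ker^ω(φ_i) for an ω-large set of indices i (i.e., ω-almost surely ker^ω(φ_i) ⊆ ker φ_i). -/
universe u v

def omegaKernel {G : Type u} [Group G] (ω : Ultrafilter ℕ) {Γ : ℕ → Type v}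
    [∀ i, Group (Γ i)] (φ : ∀ i, G →* Γ i) : Subgroup G where
  carrier := {g | {i | φ i g = 1} ∈ ω}
  one_mem' := by
    simp only [Set.mem_setOf_eq, map_one]
    exact Filter.univ_mem' fun i => trivial
  mul_mem' := by
    intro a b ha hb
    simp only [Set.mem_setOf_eq] at *
    filter_upwards [ha, hb] with i h1 h2
    simp [map_mul, h1, h2]
  inv_mem' := by
    intro a ha
    simp only [Set.mem_setOf_eq] at *
    filter_upwards [ha] with i h1
    simp [h1]

instance omegaKernel_normal {G : Type u} [Group G] (ω : Ultrafilter ℕ) {Γ : ℕ → Type v}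
    [∀ i, Group (Γ i)] (φ : ∀ i, G →* Γ i) : (omegaKernel ω φ).Normal := by
  constructor
  intro a ha g
  simp only [omegaKernel, Subgroup.mem_mk, Set.mem_setOf_eq] at *
  filter_upwards [ha] with i h1
  simp [map_mul, h1]

def VFam {ι : Type v} (Γ : ι → Type u) [∀ i, Group (Γ i)] {n : ℕ}
    (S : Set (FreeGroup (Fin n))) : Set (Σ i, Fin n → Γ i) :=
  {p | ∀ W ∈ S, FreeGroup.lift p.2 W = 1}

def EqNoethFam {ι : Type v} (Γ : ι → Type u) [∀ i, Group (Γ i)] : Prop :=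
  ∀ (n : ℕ) (S : Set (FreeGroup (Fin n))),
    ∃ S₀ : Set (FreeGroup (Fin n)), S₀ ⊆ S ∧ S₀.Finite ∧ VFam Γ S₀ = VFam Γ S

/-- Coefficient-free algebraic set over a single group. -/
def VOne (Γ : Type u) [Group Γ] {n : ℕ} (S : Set (FreeGroup (Fin n))) : Set (Fin n → Γ) :=
  {g | ∀ W ∈ S, FreeGroup.lift g W = 1}

theorem statement2 {Γ : Type u} [Group Γ] (ω : Ultrafilter ℕ)
    (hω : ∀ s : Set ℕ, s.Finite → s ∉ ω)
    (hEN : ∀ (n : ℕ) (S : Set (FreeGroup (Fin n))),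
      ∃ S₀ : Set (FreeGroup (Fin n)), S₀ ⊆ S ∧ S₀.Finite ∧ VOne Γ S₀ = VOne Γ S)
    (G : Type u) [Group G] [Group.FG G] (φ : ∀ _ : ℕ, G →* Γ) :
    {i : ℕ | ∃ ψ : (G ⧸ omegaKernel ω φ) →* Γ,
        ψ.comp (QuotientGroup.mk' (omegaKernel ω φ)) = φ i} ∈ ω := by
  classical
  obtain ⟨n, T, hcard, hT⟩ := Group.fg_iff'.mp ‹Group.FG G›
  have eT : Fin n ≃ T := (Fintype.equivFinOfCardEq (by simp [hcard])).symm
  set f : Fin n → G := fun j => ((eT j : G)) with hf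
  set π : FreeGroup (Fin n) →* G := FreeGroup.lift f with hπ
  have hrange : Set.range f = (T : Set G) := by
    have h1 : Set.range f = Set.range ((↑) : T → G) :=
      eT.surjective.range_comp _
    rw [h1]; ext x; simp
  have hπsurj : Function.Surjective π := by
    rw [← MonoidHom.range_eq_top, hπ, FreeGroup.range_lift_eq_closure,
      hrange, hT]
  -- the algebraic set of relations holding in the omega-kernel
  set S : Set (FreeGroup (Fin n)) := {W | π W ∈ omegaKernel ω φ} with hS
  obtain ⟨S₀, hS₀S, hS₀fin, hV⟩ := hEN n S
  have hA : {i : ℕ | ∀ W ∈ S₀, φ i (π W) = 1} ∈ ω := by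
    have : ∀ W ∈ S₀, {i : ℕ | φ i (π W) = 1} ∈ ω := fun W hW => hS₀S hW
    have h2 : (⋂ W ∈ S₀, {i : ℕ | φ i (π W) = 1}) ∈ ω :=
      (Filter.biInter_mem hS₀fin).mpr this
    refine Filter.mem_of_superset h2 ?_
    intro i hi
    simp only [Set.mem_iInter] at hi
    exact hi
  refine Filter.mem_of_superset hA ?_
  intro i hi
  simp only [Set.mem_setOf_eq] at hi ⊢
  -- show the omega-kernel is contained in ker (φ i)
  have hker : omegaKernel ω φ ≤ (φ i).ker := by
    intro x hx
    obtain ⟨W, rfl⟩ := hπsurj x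
    have hWS : W ∈ S := hx
    have key : ∀ W' : FreeGroup (Fin n),
        FreeGroup.lift (fun j => φ i (f j)) W' = φ i (π W') := by
      have : (FreeGroup.lift (fun j => φ i (f j)) : FreeGroup (Fin n) →* Γ)
          = (φ i).comp π := FreeGroup.ext_hom _ _ (fun j => by simp [hπ])
      intro W'; rw [this]; rfl
    have hgi : (fun j => φ i (f j)) ∈ VOne Γ S₀ := by
      intro W' hW'
      rw [key W']
      exact hi W' hW'
    have hgiS : (fun j => φ i (f j)) ∈ VOne Γ S := hV ▸ hgi
    have := hgiS W hWS
    rw [key W] at this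
    exact this
  exact ⟨QuotientGroup.lift _ (φ i) hker, by ext x; rfl⟩
end

section
/- Let ω be a non-principal ultrafilter on ℕ and 𝒢 a family of groups. The following are equivalent: (1) 𝒢 is an equationally noetherian family, i.e., for every n and every S ⊆ F_n there is a finite S_0 ⊆ S with V_𝒢(S_0) = V_𝒢(S); (2) for every finitely generated group G and every sequence (φ_i) of homomorphisms from G to members of 𝒢, φ_i factors through the limit map φ_∞ : G → G/ker^ω(φ_i) ω-almost surely; (3) for every such sequence, some φ_i factors through φ_∞. -/
universe u v

theorem statement4 {ι : Type v} (Γ : ι → Type u) [∀ i, Group (Γ i)]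
    (ω : Ultrafilter ℕ) (hω : ∀ s : Set ℕ, s.Finite → s ∉ ω) :
    List.TFAE [
      EqNoethFam Γ,
      ∀ (G : Type u) (_ : Group G) (_ : Group.FG G) (f : ℕ → ι) (φ : ∀ i, G →* Γ (f i)),
        {i : ℕ | ∃ ψ : (G ⧸ omegaKernel ω φ) →* Γ (f i),
          ψ.comp (QuotientGroup.mk' (omegaKernel ω φ)) = φ i} ∈ ω,
      ∀ (G : Type u) (_ : Group G) (_ : Group.FG G) (f : ℕ → ι) (φ : ∀ i, G →* Γ (f i)),
        ∃ i : ℕ, ∃ ψ : (G ⧸ omegaKernel ω φ) →* Γ (f i),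
          ψ.comp (QuotientGroup.mk' (omegaKernel ω φ)) = φ i ] := by
  tfae_have 1 → 2 := by
    intro hEN G _ hFG f φ
    -- pick a finite generating set and a surjection from a free group
    obtain ⟨n, T, hTcard, hTclos⟩ := Group.fg_iff'.mp hFG
    obtain ⟨e⟩ : Nonempty (Fin n ≃ T) :=
      ⟨(Fintype.equivFinOfCardEq (by simp [hTcard])).symm⟩
    set gen : Fin n → G := fun k => (e k : G) with hgen
    set π : FreeGroup (Fin n) →* G := FreeGroup.lift gen with hπ
    have hπsurj : Function.Surjective π := by
      rw [← MonoidHom.range_eq_top, hπ, FreeGroup.range_lift_eq_closure]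
      rw [← hTclos]
      congr 1
      ext x
      constructor
      · rintro ⟨k, rfl⟩; exact (e k).2
      · intro hx; exact ⟨e.symm ⟨x, hx⟩, by simp [hgen]⟩
    set S : Set (FreeGroup (Fin n)) := {W | π W ∈ omegaKernel ω φ} with hS
    obtain ⟨S₀, hS₀S, hS₀fin, hV⟩ := hEN n S
    -- the set of good indices
    have hT : (⋂ W ∈ S₀, {i | φ i (π W) = 1}) ∈ ω := by
      refine (Filter.biInter_mem hS₀fin).mpr ?_
      intro W hW
      exact hS₀S hW
    refine Filter.mem_of_superset hT ?_
    intro i hi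
    simp only [Set.mem_iInter, Set.mem_setOf_eq] at hi
    -- the point of V coming from index i
    have hker : omegaKernel ω φ ≤ (φ i).ker := by
      intro g hg
      obtain ⟨W, rfl⟩ := hπsurj g
      have hWS : W ∈ S := hg
      have hcomm : ∀ W' : FreeGroup (Fin n),
          φ i (π W') = FreeGroup.lift (fun k => φ i (gen k)) W' := fun W' =>
        FreeGroup.lift_unique ((φ i).comp π) (fun k => by simp [hπ])
      have hp : (⟨f i, fun k => φ i (gen k)⟩ : Σ j, Fin n → Γ j) ∈ VFam Γ S₀ := by
        intro W' hW'
        rw [show (FreeGroup.lift (⟨f i, fun k => φ i (gen k)⟩ : Σ j, Fin n → Γ j).2) W'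
            = φ i (π W') from (hcomm W').symm]
        exact hi W' hW'
      rw [hV] at hp
      have := hp W hWS
      rw [MonoidHom.mem_ker, hcomm W]
      exact this
    refine ⟨QuotientGroup.lift _ (φ i) hker, ?_⟩
    ext g
    simp
  tfae_have 2 → 3 := by
    intro h2 G _ hFG f φ
    obtain ⟨i, hi⟩ := Filter.nonempty_of_mem (h2 G ‹_› hFG f φ)
    exact ⟨i, hi⟩
  tfae_have 3 → 1 := by
    intro h3 n S
    by_contra hcon
    push_neg at hcon
    -- always V S ⊆ V S₀ for S₀ ⊆ S; so for each finite S₀ ⊆ S there is a point in V S₀ \ V S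
    have key : ∀ S₀ : Set (FreeGroup (Fin n)), S₀ ⊆ S → S₀.Finite →
        ∃ p, p ∈ VFam Γ S₀ ∧ p ∉ VFam Γ S := by
      intro S₀ hsub hfin
      have hne := hcon S₀ hsub hfin
      have hincl : VFam Γ S ⊆ VFam Γ S₀ := fun p hp W hW => hp W (hsub hW)
      rcases Set.not_subset.mp (fun h => hne (le_antisymm h hincl)) with ⟨p, hp1, hp2⟩
      exact ⟨p, hp1, hp2⟩
    rcases S.eq_empty_or_nonempty with rfl | hSne
    · obtain ⟨p, _, hp2⟩ := key ∅ (by simp) (Set.finite_empty)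
      exact hp2 (fun W hW => absurd hW (Set.notMem_empty W))
    -- S is nonempty and countable: enumerate it
    obtain ⟨w, hw⟩ := (Set.countable_iff_exists_surjective hSne).mp
      (by have : Countable (FreeGroup (Fin n)) := FreeGroup.toWord_injective.countable
          exact Set.to_countable S)
    -- choose witnesses
    have hchoice : ∀ k : ℕ, ∃ p : Σ j, Fin n → Γ j,
        p ∈ VFam Γ ((fun m => (w m : FreeGroup (Fin n))) '' Set.Iic k) ∧ p ∉ VFam Γ S := by
      intro k
      refine key _ ?_ ((Set.finite_Iic k).image _)
      rintro x ⟨m, _, rfl⟩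
      exact (w m).2
    choose p hp1 hp2 using hchoice
    set G : Type u := ULift.{u} (FreeGroup (Fin n)) with hG
    have hFGfree : Group.FG (FreeGroup (Fin n)) :=
      Group.fg_iff.mpr ⟨Set.range FreeGroup.of, FreeGroup.closure_range_of _,
        Set.finite_range _⟩
    have hFG : Group.FG G := by
      have : Function.Surjective (MulEquiv.ulift (α := FreeGroup (Fin n))).symm.toMonoidHom :=
        MulEquiv.ulift.symm.surjective
      exact Group.fg_of_surjective this
    set φ' : ∀ k : ℕ, G →* Γ ((p k).1) :=
      fun k => (FreeGroup.lift (p k).2).comp MulEquiv.ulift.toMonoidHom with hφ'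
    obtain ⟨i, ψ, hψ⟩ := h3 G inferInstance hFG (fun k => (p k).1) φ'
    -- every element of S lies in the omega-kernel
    have hSker : ∀ W ∈ S, (ULift.up W : G) ∈ omegaKernel ω φ' := by
      intro W hWS
      obtain ⟨m, hm⟩ := hw ⟨W, hWS⟩
      have : {k : ℕ | m ≤ k} ⊆ {k | φ' k (ULift.up W) = 1} := by
        intro k hk
        have hWmem : W ∈ (fun m' => (w m' : FreeGroup (Fin n))) '' Set.Iic k :=
          ⟨m, hk, by simp [hm]⟩
        have := hp1 k W hWmem
        simpa [hφ', MulEquiv.ulift, Equiv.ulift] using this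
      refine Filter.mem_of_superset ?_ this
      have : {k : ℕ | m ≤ k}ᶜ ∉ ω := hω _ (by rw [Set.compl_setOf]; simpa only [not_le] using Set.finite_lt_nat m)
      exact (Ultrafilter.compl_notMem_iff).mp this
    -- contradiction: p i ∈ V S
    refine hp2 i ?_
    intro W hWS
    have h1 : φ' i (ULift.up W) = 1 := by
      rw [← hψ]
      simp only [MonoidHom.comp_apply]
      have : QuotientGroup.mk' (omegaKernel ω φ') (ULift.up W) = 1 :=
        (QuotientGroup.eq_one_iff _).mpr (hSker W hWS)
      rw [this, map_one]
    simpa [hφ', MulEquiv.ulift, Equiv.ulift] using h1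
  tfae_finish
end

section
/- Let ω be a non-principal ultrafilter and 𝒢 an equationally noetherian family of groups. Suppose (α_j : L_j → L_{j+1})_{j≥1} is a sequence of surjective group homomorphisms, where each L_j is a 𝒢-limit group. Then α_j is an isomorphism for all but finitely many j. -/
universe u v

/-- `L` is a `𝒢`-limit group for the family `Γ : ι → Type u`. -/
def IsGLimitGroup (ω : Ultrafilter ℕ) {ι : Type v} (Γ : ι → Type u) [∀ i, Group (Γ i)]
    (L : Type u) [Group L] : Prop :=
  ∃ (G : Type u) (_ : Group G) (_ : Group.FG G) (f : ℕ → ι) (φ : ∀ i, G →* Γ (f i)),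
    Nonempty ((G ⧸ omegaKernel ω φ) ≃* L)

/-- A homomorphism applied to a `FreeGroup.lift` is the lift of the composition. -/
lemma hom_lift_comm {A : Type*} {B : Type*} [Group A] [Group B] (ψ : A →* B)
    {n : ℕ} (c : Fin n → A) (W : FreeGroup (Fin n)) :
    ψ (FreeGroup.lift c W) = FreeGroup.lift (fun k => ψ (c k)) W := by
  rw [← MonoidHom.comp_apply]
  congr 1
  ext x
  simp

/-- Key lemma: equations propagate in a `𝒢`-limit group.  If a tuple in a `𝒢`-limit group
satisfies a finite subsystem `S₀` with the same variety as `S`, it satisfies all of `S`. -/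
lemma key_lemma {ι : Type v} (Γ : ι → Type u) [∀ i, Group (Γ i)] (ω : Ultrafilter ℕ)
    {n : ℕ} {S₀ S : Set (FreeGroup (Fin n))} (hfin : S₀.Finite)
    (hV : VFam Γ S₀ = VFam Γ S) {L : Type u} [Group L] (hL : IsGLimitGroup ω Γ L)
    (l : Fin n → L) (h0 : ∀ W ∈ S₀, FreeGroup.lift l W = 1) :
    ∀ W ∈ S, FreeGroup.lift l W = 1 := by
  obtain ⟨G, _, _, f, φ, ⟨e⟩⟩ := hL
  -- lift the tuple `l` to `G`
  have hsurj : Function.Surjective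
      ((e.toMonoidHom.comp (QuotientGroup.mk' (omegaKernel ω φ)))) :=
    e.surjective.comp Quotient.mk''_surjective
  choose g hg using fun k => hsurj (l k)
  -- membership in the ω-kernel
  have hker : ∀ W : FreeGroup (Fin n),
      FreeGroup.lift l W = 1 ↔ {i | φ i (FreeGroup.lift g W) = 1} ∈ ω := by
    intro W
    have h1 : FreeGroup.lift l W
        = (e.toMonoidHom.comp (QuotientGroup.mk' (omegaKernel ω φ)))
            (FreeGroup.lift g W) := by
      rw [hom_lift_comm]
      exact congrArg (fun c => FreeGroup.lift c W) (funext fun k => (hg k).symm)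
    rw [h1]
    constructor
    · intro h
      have h2 : (QuotientGroup.mk' (omegaKernel ω φ)) (FreeGroup.lift g W) = 1 := by
        apply e.injective
        simpa using h
      have h3 : FreeGroup.lift g W ∈ omegaKernel ω φ := by
        rwa [← QuotientGroup.ker_mk' (omegaKernel ω φ), MonoidHom.mem_ker]
      exact h3
    · intro h
      have h3 : FreeGroup.lift g W ∈ omegaKernel ω φ := h
      have h2 : (QuotientGroup.mk' (omegaKernel ω φ)) (FreeGroup.lift g W) = 1 := by
        rwa [← MonoidHom.mem_ker, QuotientGroup.ker_mk' (omegaKernel ω φ)]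
      simp [MonoidHom.comp_apply, h2]
  -- the set of indices where all of `S₀` holds
  have hA : (⋂ W ∈ S₀, {i | φ i (FreeGroup.lift g W) = 1}) ∈ ω := by
    exact (Filter.biInter_mem hfin).mpr fun W hW => (hker W).mp (h0 W hW)
  intro W hW
  rw [hker W]
  apply Filter.mem_of_superset hA
  intro i hi
  have hmem : (⟨f i, fun k => φ i (g k)⟩ : Σ j, Fin n → Γ j) ∈ VFam Γ S₀ := by
    intro W' hW'
    have := Set.mem_iInter₂.mp hi W' hW'
    simpa [hom_lift_comm] using this
  rw [hV] at hmem
  have := hmem W hW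
  simpa [hom_lift_comm] using this

theorem statement6 {ι : Type v} (Γ : ι → Type u) [∀ i, Group (Γ i)]
    (ω : Ultrafilter ℕ) (hω : ∀ s : Set ℕ, s.Finite → s ∉ ω)
    (hEN : EqNoethFam Γ)
    (L : ℕ → Type u) [∀ j, Group (L j)]
    (hL : ∀ j, IsGLimitGroup ω Γ (L j))
    (α : ∀ j, L j →* L (j + 1)) (hsurj : ∀ j, Function.Surjective (α j)) :
    ∃ N : ℕ, ∀ j ≥ N, Function.Bijective (α j) := by
  classical
  -- L 0 is finitely generated: extract a generating tuple
  obtain ⟨G, _, hFG, f, φ, ⟨e⟩⟩ := hL 0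
  have hFGL : Group.FG (L 0) := by
    have : Group.FG (G ⧸ omegaKernel ω φ) := Group.fg_of_surjective
      (QuotientGroup.mk'_surjective (omegaKernel ω φ))
    exact Group.fg_of_surjective (f := e.toMonoidHom) e.surjective
  obtain ⟨n, T, hcard, hclos⟩ := Group.fg_iff'.mp hFGL
  subst hcard
  -- the generating tuple of L 0
  let t0 : Fin T.card → L 0 := fun k => (T.equivFin.symm k).1
  have ht0 : Function.Surjective (FreeGroup.lift t0) := by
    rw [← MonoidHom.range_eq_top, FreeGroup.range_lift_eq_closure]
    rw [← top_le_iff, ← hclos]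
    apply Subgroup.closure_mono
    intro x hx
    exact ⟨T.equivFin ⟨x, hx⟩, by simp [t0]⟩
  -- tuples in each L j
  let t : ∀ j, Fin T.card → L j := fun j => Nat.rec t0 (fun j tj k => α j (tj k)) j
  have htsucc : ∀ j (W : FreeGroup (Fin T.card)),
      FreeGroup.lift (t (j + 1)) W = α j (FreeGroup.lift (t j) W) := by
    intro j W
    rw [hom_lift_comm]
  have htsurj : ∀ j, Function.Surjective (FreeGroup.lift (t j)) := by
    intro j
    induction j with
    | zero => exact ht0
    | succ j ih =>
      intro x
      obtain ⟨y, hy⟩ := hsurj j x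
      obtain ⟨W, hW⟩ := ih y
      exact ⟨W, by rw [htsucc j W, hW, hy]⟩
  -- the increasing chain of relation sets
  let Srel : ℕ → Set (FreeGroup (Fin T.card)) := fun j => {W | FreeGroup.lift (t j) W = 1}
  have hmono : Monotone Srel := by
    apply monotone_nat_of_le_succ
    intro j W hW
    simp only [Srel, Set.mem_setOf_eq] at *
    rw [htsucc j W, hW, map_one]
  set S : Set (FreeGroup (Fin T.card)) := ⋃ j, Srel j with hS
  obtain ⟨S₀, hsub, hfin, hV⟩ := hEN T.card S
  -- find N with S₀ ⊆ Srel N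
  have hN : ∃ N, S₀ ⊆ Srel N := by
    choose idx hidx using fun (W : S₀) => Set.mem_iUnion.mp (hsub W.2)
    set N := hfin.toFinset.sup (fun W => if h : W ∈ S₀ then idx ⟨W, h⟩ else 0) with hNdef
    refine ⟨N, fun W hW => ?_⟩
    have hWle : idx ⟨W, hW⟩ ≤ N := by
      have := Finset.le_sup (f := fun W => if h : W ∈ S₀ then idx ⟨W, h⟩ else 0)
        (hfin.mem_toFinset.mpr hW)
      simpa [hW, hNdef] using this
    exact hmono hWle (hidx ⟨W, hW⟩)
  obtain ⟨N, hN⟩ := hN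
  refine ⟨N, fun j hj => ⟨?_, hsurj j⟩⟩
  -- injectivity for j ≥ N
  have hS₀j : ∀ W ∈ S₀, FreeGroup.lift (t j) W = 1 := fun W hW => hmono hj (hN hW)
  have hall : ∀ W ∈ S, FreeGroup.lift (t j) W = 1 :=
    key_lemma Γ ω hfin hV (hL j) (t j) hS₀j
  rw [injective_iff_map_eq_one]
  intro x hx
  obtain ⟨W, hW⟩ := htsurj j x
  have hWS : W ∈ S := Set.mem_iUnion.mpr ⟨j + 1, by
    simp only [Srel, Set.mem_setOf_eq]
    rw [htsucc j W, hW, hx]⟩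
  rw [← hW]
  exact hall W hWS
end

section
/- Let ω be a non-principal ultrafilter and 𝒢 an equationally noetherian family of groups. Then every 𝒢-limit group L = G/ker^ω(φ_i) is fully residually 𝒢: for every finite subset F ⊆ L \ {1} there exists Γ ∈ 𝒢 and a homomorphism η : L → Γ with η(f) ≠ 1 for all f ∈ F. -/
universe u v

theorem statement9 {ι : Type v} {Γ : ι → Type u} [∀ i, Group (Γ i)]
    (ω : Ultrafilter ℕ) (hω : ∀ s : Set ℕ, s.Finite → s ∉ ω)
    (hEN : EqNoethFam Γ)
    {G : Type u} [Group G] [Group.FG G] {f : ℕ → ι} (φ : ∀ i, G →* Γ (f i))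
    (F : Set (G ⧸ omegaKernel ω φ)) (hF : F.Finite)
    (h1 : (1 : G ⧸ omegaKernel ω φ) ∉ F) :
    ∃ (k : ι) (η : (G ⧸ omegaKernel ω φ) →* Γ k), ∀ x ∈ F, η x ≠ 1 := by
  classical
  obtain ⟨S, hScl, hSfin⟩ := Group.fg_iff.mp ‹Group.FG G›
  haveI := hSfin.fintype
  set n := Fintype.card S with hn
  set gens : Fin n → G := fun i => ((Fintype.equivFin S).symm i : G) with hgensdef
  have hgens : Set.range gens = S := by
    have := (Fintype.equivFin S).symm.surjective.range_comp (Subtype.val : S → G)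
    rw [hgensdef]
    calc Set.range (fun i => ((Fintype.equivFin S).symm i : G))
        = Set.range (Subtype.val : S → G) := this
      _ = S := Subtype.range_coe
  set π : FreeGroup (Fin n) →* G := FreeGroup.lift gens with hπ
  have hπsurj : Function.Surjective π := by
    rw [← MonoidHom.range_eq_top, hπ, FreeGroup.range_lift_eq_closure, hgens, hScl]
  set Sw : Set (FreeGroup (Fin n)) := {W | π W ∈ omegaKernel ω φ} with hSw
  obtain ⟨S₀, hS₀sub, hS₀fin, hV⟩ := hEN n Sw
  have key : ∀ W ∈ S₀, {i | φ i (π W) = 1} ∈ ω := fun W hW => hS₀sub hW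
  have hA : {i | ∀ W ∈ S₀, φ i (π W) = 1} ∈ ω := by
    have h : {i | ∀ W ∈ S₀, φ i (π W) = 1} = ⋂ W ∈ S₀, {i | φ i (π W) = 1} := by
      ext i; simp
    rw [h]
    exact (Filter.biInter_mem hS₀fin).mpr key
  set Flift : Set G := (fun x : G ⧸ omegaKernel ω φ => Quotient.out x) '' F with hFl
  have hFlfin : Flift.Finite := hF.image _
  have hgne : ∀ g ∈ Flift, {i | φ i g = 1}ᶜ ∈ ω := by
    intro g hg
    obtain ⟨x, hxF, rfl⟩ := hg
    rw [Ultrafilter.compl_mem_iff_notMem]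
    intro hmem
    have hk : (Quotient.out x : G) ∈ omegaKernel ω φ := hmem
    have hx1 : (x : G ⧸ omegaKernel ω φ) = 1 := by
      rw [← Quotient.out_eq x]
      exact (QuotientGroup.eq_one_iff _).mpr hk
    exact h1 (hx1 ▸ hxF)
  have hB : {i | ∀ g ∈ Flift, φ i g ≠ 1} ∈ ω := by
    have h : {i | ∀ g ∈ Flift, φ i g ≠ 1} = ⋂ g ∈ Flift, {i | φ i g = 1}ᶜ := by
      ext i; simp
    rw [h]
    exact (Filter.biInter_mem hFlfin).mpr hgne
  obtain ⟨i, hiA, hiB⟩ := Filter.nonempty_of_mem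
    (Filter.inter_mem hA hB : _ ∈ (ω : Filter ℕ))
  -- the point associated to φ i lies in VFam Γ S₀, hence in VFam Γ Sw
  have hcomp : ∀ W, FreeGroup.lift (fun a => φ i (gens a)) W = φ i (π W) := by
    intro W
    have : ((φ i).comp π : FreeGroup (Fin n) →* Γ (f i)) =
        FreeGroup.lift (fun a => φ i (gens a)) := by
      apply FreeGroup.ext_hom
      intro a
      simp [hπ]
    exact (congrFun (congrArg _ this.symm) W : _)
  have hpt : (⟨f i, fun a => φ i (gens a)⟩ : Σ j, Fin n → Γ j) ∈ VFam Γ Sw := by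
    rw [← hV]
    intro W hW
    rw [hcomp W]
    exact hiA W hW
  have hker : omegaKernel ω φ ≤ (φ i).ker := by
    intro g hg
    obtain ⟨W, rfl⟩ := hπsurj g
    have hWS : W ∈ Sw := hg
    have := hpt W hWS
    rw [hcomp W] at this
    exact this
  refine ⟨f i, QuotientGroup.lift _ (φ i) hker, ?_⟩
  intro x hxF
  have hx : x = QuotientGroup.mk (Quotient.out x) := (Quotient.out_eq x).symm
  rw [hx, QuotientGroup.lift_mk']
  exact hiB (Quotient.out x) ⟨x, hxF, rfl⟩
end

section
/- Suppose a group Γ acts by isometries with bounded orbits on a δ-hyperbolic geodesic metric space X, and let ε > 0. Then there exists a point x ∈ X such that d(x, g·x) ≤ 4δ + 2ε for every g ∈ Γ. -/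
universe u v


/-- `f` parametrizes a geodesic from `x` to `y` (by arc length on `[0, dist x y]`). -/
def IsGeodesicParam {X : Type u} [MetricSpace X] (x y : X) (f : ℝ → X) : Prop :=
  f 0 = x ∧ f (dist x y) = y ∧
    ∀ s ∈ Set.Icc (0 : ℝ) (dist x y), ∀ t ∈ Set.Icc (0 : ℝ) (dist x y),
      dist (f s) (f t) = |s - t|

/-- A geodesic metric space: every pair of points is joined by a geodesic. -/
def GeodesicSpace (X : Type u) [MetricSpace X] : Prop :=
  ∀ x y : X, ∃ f : ℝ → X, IsGeodesicParam x y f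

/-- `δ`-hyperbolicity via slim triangles: every side of a geodesic triangle lies in the
closed `δ`-neighborhood of the union of the other two sides. -/
def SlimTriangles (X : Type u) [MetricSpace X] (δ : ℝ) : Prop :=
  ∀ (x y z : X) (f g h : ℝ → X), IsGeodesicParam x y f → IsGeodesicParam y z g →
    IsGeodesicParam x z h → ∀ t ∈ Set.Icc (0 : ℝ) (dist x y),
      Metric.infDist (f t) (g '' Set.Icc 0 (dist y z) ∪ h '' Set.Icc 0 (dist x z)) ≤ δ

theorem statement12 {X : Type u} [MetricSpace X] [Nonempty X]
    {Γ : Type v} [Group Γ] [MulAction Γ X]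
    (hiso : ∀ g : Γ, Isometry fun x : X => g • x)
    (δ : ℝ) (hδ : 0 ≤ δ) (hgeo : GeodesicSpace X) (hslim : SlimTriangles X δ)
    (hbdd : ∀ x : X, Bornology.IsBounded (Set.range fun g : Γ => g • x))
    (ε : ℝ) (hε : 0 < ε) :
    ∃ x : X, ∀ g : Γ, dist x (g • x) ≤ 4 * δ + 2 * ε := by
  classical
  have _instΓ : Nonempty Γ := ⟨1⟩
  obtain ⟨x₀⟩ := ‹Nonempty X›
  obtain ⟨C, hC⟩ := Metric.isBounded_iff.mp (hbdd x₀)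
  have hbd : ∀ z : X, BddAbove (Set.range fun g : Γ => dist z (g • x₀)) := by
    intro z
    refine ⟨dist z x₀ + C, ?_⟩
    rintro _ ⟨g, rfl⟩
    have h1 : ((1:Γ) • x₀ : X) = x₀ := one_smul _ _
    have hx : dist ((1:Γ) • x₀ : X) (g • x₀) ≤ C := hC ⟨1, rfl⟩ ⟨g, rfl⟩
    rw [h1] at hx
    calc dist z (g • x₀) ≤ dist z x₀ + dist x₀ (g • x₀) := dist_triangle _ _ _
      _ ≤ dist z x₀ + C := by linarith
  set R : X → ℝ := fun z => ⨆ g : Γ, dist z (g • x₀) with hRdef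
  have hRge : ∀ z, dist z x₀ ≤ R z := by
    intro z
    have := le_ciSup (hbd z) (1 : Γ)
    simpa using this
  have hR0 : ∀ z, 0 ≤ R z := fun z => le_trans dist_nonneg (hRge z)
  have hbdR : BddBelow (Set.range R) := ⟨0, by rintro _ ⟨z, rfl⟩; exact hR0 z⟩
  set r : ℝ := ⨅ z, R z with hrdef
  have hRle_iff : ∀ z : X, ∀ b : ℝ, (∀ k : Γ, dist z (k • x₀) ≤ b) → R z ≤ b := by
    intro z b hb
    exact ciSup_le hb
  have hRmem : ∀ z : X, ∀ k : Γ, dist z (k • x₀) ≤ R z := by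
    intro z k
    exact le_ciSup (hbd z) k
  -- key lemma: two ε-quasicenters are within 4δ + 2ε
  have key : ∀ c₁ c₂ : X, (∀ k : Γ, dist c₁ (k • x₀) ≤ r + ε) →
      (∀ k : Γ, dist c₂ (k • x₀) ≤ r + ε) → dist c₁ c₂ ≤ 4 * δ + 2 * ε := by
    intro c₁ c₂ h₁ h₂
    obtain ⟨f, hf0, hfd, hfI⟩ := hgeo c₁ c₂
    set d := dist c₁ c₂ with hdd
    have hd0 : 0 ≤ d := dist_nonneg
    have hmem : d / 2 ∈ Set.Icc (0 : ℝ) d := ⟨by linarith, by linarith⟩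
    set m := f (d / 2) with hm
    have hc₁m : dist c₁ m = d / 2 := by
      have h := hfI 0 ⟨le_rfl, hd0⟩ (d / 2) hmem
      rw [hf0] at h
      rw [h, zero_sub, abs_neg, abs_of_nonneg (by linarith)]
    have hc₂m : dist m c₂ = d / 2 := by
      have h := hfI (d / 2) hmem d ⟨hd0, le_rfl⟩
      rw [hfd] at h
      rw [h, abs_of_nonpos (by linarith)]
      ring
    have hmain : ∀ η : ℝ, 0 < η → d ≤ 4 * δ + 2 * ε + 4 * η := by
      intro η hη
      have hRm : ∀ k : Γ, dist m (k • x₀) ≤ r + ε + 2 * δ + 2 * η - d / 2 := by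
        intro k
        set y := k • x₀ with hy
        obtain ⟨g', hg0, hgd, hgI⟩ := hgeo c₂ y
        obtain ⟨h', hh0, hhd, hhI⟩ := hgeo c₁ y
        have happ := hslim c₁ c₂ y f g' h' ⟨hf0, hfd, hfI⟩ ⟨hg0, hgd, hgI⟩
          ⟨hh0, hhd, hhI⟩ (d / 2) hmem
        have hS : (g' '' Set.Icc 0 (dist c₂ y) ∪ h' '' Set.Icc 0 (dist c₁ y)).Nonempty :=
          ⟨g' 0, Or.inl ⟨0, ⟨le_rfl, dist_nonneg⟩, rfl⟩⟩
        have hlt : Metric.infDist (f (d / 2))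
            (g' '' Set.Icc 0 (dist c₂ y) ∪ h' '' Set.Icc 0 (dist c₁ y)) < δ + η :=
          lt_of_le_of_lt happ (by linarith)
        obtain ⟨p, hpS, hpd⟩ := (Metric.infDist_lt_iff hS).mp hlt
        rw [← hm] at hpd
        rcases hpS with ⟨s, hs, rfl⟩ | ⟨s, hs, rfl⟩
        · -- p on geodesic c₂ → y
          have e1 : dist c₂ (g' s) = s := by
            have h := hgI 0 ⟨le_rfl, dist_nonneg⟩ s hs
            rw [hg0] at h
            rw [h, zero_sub, abs_neg, abs_of_nonneg hs.1]
          have e2 : dist (g' s) y = dist c₂ y - s := by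
            have h := hgI s hs (dist c₂ y) ⟨dist_nonneg, le_rfl⟩
            rw [hgd] at h
            rw [h, abs_of_nonpos (by linarith [hs.2])]
            ring
          have hs_lb : d / 2 ≤ dist m (g' s) + s := by
            calc d / 2 = dist m c₂ := hc₂m.symm
              _ ≤ dist m (g' s) + dist (g' s) c₂ := dist_triangle _ _ _
              _ = dist m (g' s) + s := by rw [dist_comm (g' s) c₂, e1]
          have hDy : dist c₂ y ≤ r + ε := h₂ k
          calc dist m y ≤ dist m (g' s) + dist (g' s) y := dist_triangle _ _ _
            _ = dist m (g' s) + (dist c₂ y - s) := by rw [e2]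
            _ ≤ r + ε + 2 * δ + 2 * η - d / 2 := by linarith
        · -- p on geodesic c₁ → y
          have e1 : dist c₁ (h' s) = s := by
            have h := hhI 0 ⟨le_rfl, dist_nonneg⟩ s hs
            rw [hh0] at h
            rw [h, zero_sub, abs_neg, abs_of_nonneg hs.1]
          have e2 : dist (h' s) y = dist c₁ y - s := by
            have h := hhI s hs (dist c₁ y) ⟨dist_nonneg, le_rfl⟩
            rw [hhd] at h
            rw [h, abs_of_nonpos (by linarith [hs.2])]
            ring
          have hs_lb : d / 2 ≤ dist m (h' s) + s := by
            calc d / 2 = dist c₁ m := hc₁m.symm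
              _ ≤ dist c₁ (h' s) + dist (h' s) m := dist_triangle _ _ _
              _ = dist m (h' s) + s := by rw [dist_comm (h' s) m, e1]; ring
          have hDy : dist c₁ y ≤ r + ε := h₁ k
          calc dist m y ≤ dist m (h' s) + dist (h' s) y := dist_triangle _ _ _
            _ = dist m (h' s) + (dist c₁ y - s) := by rw [e2]
            _ ≤ r + ε + 2 * δ + 2 * η - d / 2 := by linarith
      have hRmle : R m ≤ r + ε + 2 * δ + 2 * η - d / 2 := hRle_iff m _ hRm
      have hrle : r ≤ R m := ciInf_le hbdR m
      linarith
    by_contra hcon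
    push_neg at hcon
    have := hmain ((d - (4 * δ + 2 * ε)) / 8) (by linarith)
    linarith
  -- choose an ε-quasicenter
  have hlt : (⨅ z, R z) < r + ε := by
    rw [← hrdef]; linarith
  obtain ⟨x, hx⟩ := exists_lt_of_ciInf_lt hlt
  have hRinv : ∀ g : Γ, R (g • x) = R x := by
    intro g
    have hrange : (Set.range fun h : Γ => dist (g • x) (h • x₀)) =
        (Set.range fun h : Γ => dist x (h • x₀)) := by
      ext c
      constructor
      · rintro ⟨h, rfl⟩
        refine ⟨g⁻¹ * h, ?_⟩
        have hi := (hiso g⁻¹).dist_eq (g • x) (h • x₀)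
        rw [inv_smul_smul, ← mul_smul] at hi
        exact hi
      · rintro ⟨h, rfl⟩
        refine ⟨g * h, ?_⟩
        have hi := (hiso g).dist_eq x (h • x₀)
        rw [← mul_smul] at hi
        exact hi
    simp only [hRdef, iSup]
    rw [hrange]
  refine ⟨x, fun g => ?_⟩
  exact key x (g • x) (fun k => (hRmem x k).trans hx.le)
    (fun k => (hRmem (g • x) k).trans (by rw [hRinv g]; exact hx.le))
end

section
/- Let ω be a non-principal ultrafilter, 𝒢 a family of groups, G a finitely generated group, and (φ_i) a sequence of homomorphisms from G to members of 𝒢 with limit group L = G/ker^ω(φ_i) and limit map φ_∞. Suppose L is finitely presented relative to subgroups {P_1,...,P_n}, and suppose for each j there is a subgroup P̃_j ≤ G with φ_∞(P̃_j) = P_j such that ω-almost surely ker(φ_∞|_{P̃_j}) ⊆ ker(φ_i|_{P̃_j}). Then ω-almost surely ker(φ_∞) ⊆ ker(φ_i), i.e., φ_i factors through φ_∞ ω-almost surely. -/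
universe u v

/-- The family consisting of the free group on `S` together with the subgroups `P j`. -/
def relFam {L : Type u} [Group L] (S : Finset L) {n : ℕ} (P : Fin n → Subgroup L) :
    Unit ⊕ Fin n → Type u :=
  Sum.elim (fun _ => FreeGroup ↥S) (fun j => ↥(P j))

instance relFamGroup {L : Type u} [Group L] (S : Finset L) {n : ℕ} (P : Fin n → Subgroup L) :
    ∀ j, Group (relFam S P j) := fun j =>
  match j with
  | .inl _ => inferInstanceAs (Group (FreeGroup ↥S))
  | .inr j => inferInstanceAs (Group ↥(P j))

/-- The natural homomorphism `F(S) ∗ P₁ ∗ ⋯ ∗ Pₙ →* L` which is the identity on `S`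
and on each `P j`. -/
def relMap {L : Type u} [Group L] (S : Finset L) {n : ℕ} (P : Fin n → Subgroup L) :
    Monoid.CoprodI (relFam S P) →* L :=
  Monoid.CoprodI.lift fun j =>
    match j with
    | .inl _ => FreeGroup.lift (fun s : ↥S => (s : L))
    | .inr j => (P j).subtype

/-- `L` is finitely presented relative to the subgroups `P j`: for some finite `S ⊆ L` the
natural map `F(S) ∗ P₁ ∗ ⋯ ∗ Pₙ →* L` is surjective with kernel normally generated by a
finite set. -/
def RelFinitelyPresented {L : Type u} [Group L] {n : ℕ} (P : Fin n → Subgroup L) : Prop :=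
  ∃ S : Finset L, Function.Surjective (relMap S P) ∧
    ∃ R : Finset (Monoid.CoprodI (relFam S P)),
      (relMap S P).ker = Subgroup.normalClosure (R : Set (Monoid.CoprodI (relFam S P)))

section Helpers

variable {L : Type u} [Group L] (S : Finset L) {n : ℕ} (P : Fin n → Subgroup L)
  {H : Type*} [Group H]

/-- The inclusion of the free group factor. -/
def ofF : FreeGroup ↥S →* Monoid.CoprodI (relFam S P) :=
  (Monoid.CoprodI.of : relFam S P (Sum.inl ()) →* _)

/-- The inclusion of the `j`-th subgroup factor. -/
def ofP (j : Fin n) : ↥(P j) →* Monoid.CoprodI (relFam S P) :=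
  (Monoid.CoprodI.of : relFam S P (Sum.inr j) →* _)

/-- Lift a map on `S` and multiplicative maps on the `P j` to the free product. -/
def myLift (h : ↥S → H) (σ : ∀ j, ↥(P j) → H)
    (hσ : ∀ j (p q : ↥(P j)), σ j (p * q) = σ j p * σ j q) :
    Monoid.CoprodI (relFam S P) →* H :=
  Monoid.CoprodI.lift fun j =>
    match j with
    | .inl _ => FreeGroup.lift h
    | .inr j => MonoidHom.mk' (σ j) (hσ j)

@[simp] lemma myLift_inl (h : ↥S → H) (σ : ∀ j, ↥(P j) → H) (hσ) (s : ↥S) :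
    myLift S P h σ hσ (ofF S P (FreeGroup.of s)) = h s := by
  show Monoid.CoprodI.lift _ (Monoid.CoprodI.of (i := Sum.inl ()) _) = _
  refine Eq.trans (Monoid.CoprodI.lift_of ..) ?_
  exact FreeGroup.lift_apply_of

@[simp] lemma myLift_inr (h : ↥S → H) (σ : ∀ j, ↥(P j) → H) (hσ) (j : Fin n) (p : ↥(P j)) :
    myLift S P h σ hσ (ofP S P j p) = σ j p := by
  show Monoid.CoprodI.lift _ (Monoid.CoprodI.of (i := Sum.inr j) _) = _
  refine Eq.trans (Monoid.CoprodI.lift_of ..) ?_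
  rfl

lemma relFam_hom_ext (f g : Monoid.CoprodI (relFam S P) →* H)
    (h1 : ∀ s : ↥S, f (ofF S P (FreeGroup.of s)) = g (ofF S P (FreeGroup.of s)))
    (h2 : ∀ (j : Fin n) (p : ↥(P j)), f (ofP S P j p) = g (ofP S P j p)) : f = g := by
  apply Monoid.CoprodI.ext_hom
  rintro (⟨⟩ | j)
  · apply FreeGroup.ext_hom
    intro s
    exact h1 s
  · ext p
    exact h2 j p

@[simp] lemma relMap_inl (s : ↥S) :
    relMap S P (ofF S P (FreeGroup.of s)) = (s : L) := by
  show Monoid.CoprodI.lift _ (Monoid.CoprodI.of (i := Sum.inl ()) _) = _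
  refine Eq.trans (Monoid.CoprodI.lift_of ..) ?_
  exact FreeGroup.lift_apply_of

@[simp] lemma relMap_inr (j : Fin n) (p : ↥(P j)) :
    relMap S P (ofP S P j p) = (p : L) := by
  show Monoid.CoprodI.lift _ (Monoid.CoprodI.of (i := Sum.inr j) _) = _
  refine Eq.trans (Monoid.CoprodI.lift_of ..) ?_
  rfl

end Helpers

theorem key_lemma_s14 {G : Type u} [Group G] [Group.FG G] (K : Subgroup G) [K.Normal]
    {n : ℕ} (P : Fin n → Subgroup (G ⧸ K)) (hfp : RelFinitelyPresented P)
    (Pt : Fin n → Subgroup G)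
    (hPt : ∀ j, (Pt j).map (QuotientGroup.mk' K) = P j) :
    ∃ F : Finset G, (∀ x ∈ F, x ∈ K) ∧
      K ≤ Subgroup.normalClosure
        ((F : Set G) ∪ ⋃ j, ((Pt j : Set G) ∩ (K : Set G))) := by
  classical
  obtain ⟨S, hsurj, R, hker⟩ := hfp
  obtain ⟨T, hT⟩ := (‹Group.FG G›).out
  set mk : G →* G ⧸ K := QuotientGroup.mk' K with hmkdef
  set base : Set G := ⋃ j, ((Pt j : Set G) ∩ (K : Set G)) with hbase
  have hbaseK : base ⊆ (K : Set G) := by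
    intro x hx
    simp only [hbase, Set.mem_iUnion, Set.mem_inter_iff] at hx
    obtain ⟨j, _, hxK⟩ := hx
    exact hxK
  set N₀ : Subgroup G := Subgroup.normalClosure base with hN₀
  have hN₀K : N₀ ≤ K := Subgroup.normalClosure_le_normal hbaseK
  set π₀ : G →* G ⧸ N₀ := QuotientGroup.mk' N₀ with hπ₀def
  set μ₀ : G ⧸ N₀ →* G ⧸ K :=
    QuotientGroup.lift N₀ mk (by rw [hmkdef, QuotientGroup.ker_mk']; exact hN₀K) with hμ₀def
  have hμ₀ : ∀ g : G, μ₀ (π₀ g) = mk g := fun g => QuotientGroup.lift_mk' _ _ g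
  -- sections
  have hσex : ∀ (j : Fin n) (p : ↥(P j)), ∃ g, g ∈ Pt j ∧ mk g = (p : G ⧸ K) := by
    intro j p
    have hp : (p : G ⧸ K) ∈ (Pt j).map mk := by rw [hmkdef, hPt j]; exact p.2
    obtain ⟨g, hg, hg'⟩ := Subgroup.mem_map.mp hp
    exact ⟨g, hg, hg'⟩
  choose σ hσmem hσmk using hσex
  choose hat hhat using fun s : ↥S => QuotientGroup.mk'_surjective K (s : G ⧸ K)
  have hσmul : ∀ (j : Fin n) (p q : ↥(P j)),
      π₀ (σ j (p * q)) = π₀ (σ j p) * π₀ (σ j q) := by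
    intro j p q
    have hd : (σ j p * σ j q)⁻¹ * σ j (p * q) ∈ N₀ := by
      apply Subgroup.subset_normalClosure
      refine Set.mem_iUnion.mpr ⟨j, ?_, ?_⟩
      · exact mul_mem (inv_mem (mul_mem (hσmem j p) (hσmem j q))) (hσmem j (p * q))
      · have h1 : mk ((σ j p * σ j q)⁻¹ * σ j (p * q)) = 1 := by
          rw [map_mul, map_inv, map_mul, hσmk, hσmk, hσmk, Subgroup.coe_mul,
            inv_mul_cancel]
        exact (QuotientGroup.eq_one_iff _).mp h1
    have h1 : π₀ ((σ j p * σ j q)⁻¹ * σ j (p * q)) = 1 := (QuotientGroup.eq_one_iff _).mpr hd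
    rw [map_mul, map_inv, map_mul, inv_mul_eq_one] at h1
    exact h1.symm
  set χ0 : Monoid.CoprodI (relFam S P) →* G ⧸ N₀ :=
    myLift S P (fun s => π₀ (hat s)) (fun j p => π₀ (σ j p)) hσmul with hχ0
  have hμ₀χ : ∀ v, μ₀ (χ0 v) = relMap S P v := by
    have h2 : μ₀.comp χ0 = relMap S P := by
      apply relFam_hom_ext
      · intro s
        rw [MonoidHom.comp_apply, hχ0, myLift_inl, relMap_inl, hμ₀, hhat]
      · intro j p
        rw [MonoidHom.comp_apply, hχ0, myLift_inr, relMap_inr, hμ₀, hσmk]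
    intro v
    exact DFunLike.congr_fun h2 v
  choose rep hrep using QuotientGroup.mk'_surjective N₀
  choose w hw using hsurj
  set F : Finset G := Finset.image (fun r => rep (χ0 r)) R ∪
      Finset.image (fun t => rep ((π₀ t)⁻¹ * χ0 (w (mk t)))) T with hF
  have hFK : ∀ x ∈ F, x ∈ K := by
    intro x hx
    rcases Finset.mem_union.mp hx with hx | hx
    · obtain ⟨r, hr, rfl⟩ := Finset.mem_image.mp hx
      have h1 : mk (rep (χ0 r)) = relMap S P r := by
        rw [← hμ₀, hrep, hμ₀χ]
      have h2 : relMap S P r = 1 := by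
        have : r ∈ (relMap S P).ker := by
          rw [hker]; exact Subgroup.subset_normalClosure hr
        exact MonoidHom.mem_ker.mp this
      exact (QuotientGroup.eq_one_iff _).mp (h1.trans h2)
    · obtain ⟨t, ht, rfl⟩ := Finset.mem_image.mp hx
      have h1 : mk (rep ((π₀ t)⁻¹ * χ0 (w (mk t)))) = 1 := by
        rw [← hμ₀, hrep, map_mul, map_inv, hμ₀, hμ₀χ, hw, inv_mul_cancel]
      exact (QuotientGroup.eq_one_iff _).mp h1
  refine ⟨F, hFK, ?_⟩
  set N : Subgroup G := Subgroup.normalClosure ((F : Set G) ∪ base) with hN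
  have hN₀N : N₀ ≤ N := Subgroup.normalClosure_mono Set.subset_union_right
  have hNK : N ≤ K := by
    apply Subgroup.normalClosure_le_normal
    rintro x (hx | hx)
    · exact hFK x hx
    · exact hbaseK hx
  set π : G →* G ⧸ N := QuotientGroup.mk' N with hπdef
  set q : G ⧸ N₀ →* G ⧸ N :=
    QuotientGroup.lift N₀ π (by rw [hπdef, QuotientGroup.ker_mk']; exact hN₀N) with hqdef
  have hqπ : ∀ g : G, q (π₀ g) = π g := fun g => QuotientGroup.lift_mk' _ _ g
  set μ : G ⧸ N →* G ⧸ K :=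
    QuotientGroup.lift N mk (by rw [hmkdef, QuotientGroup.ker_mk']; exact hNK) with hμdef
  have hμπ : ∀ g : G, μ (π g) = mk g := fun g => QuotientGroup.lift_mk' _ _ g
  have hmemN : ∀ x ∈ F, x ∈ N := fun x hx =>
    Subgroup.subset_normalClosure (Set.mem_union_left _ hx)
  have hχR : ∀ r ∈ (R : Set (Monoid.CoprodI (relFam S P))), q (χ0 r) = 1 := by
    intro r hr
    rw [← hrep (χ0 r), hqπ]
    apply (QuotientGroup.eq_one_iff _).mpr
    exact hmemN _ (Finset.mem_union_left _ (Finset.mem_image.mpr ⟨r, hr, rfl⟩))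
  have hkerχ : (relMap S P).ker ≤ (q.comp χ0).ker := by
    rw [hker]
    apply Subgroup.normalClosure_le_normal
    intro r hr
    exact MonoidHom.mem_ker.mpr (hχR r hr)
  have hηkey : ∀ (v : Monoid.CoprodI (relFam S P)) (l : G ⧸ K), relMap S P v = l →
      q (χ0 (w l)) = q (χ0 v) := by
    intro v l hv
    have hm : (w l)⁻¹ * v ∈ (relMap S P).ker := by
      rw [MonoidHom.mem_ker, map_mul, map_inv, hw, hv, inv_mul_cancel]
    have h1 := MonoidHom.mem_ker.mp (hkerχ hm)
    simp only [MonoidHom.comp_apply, map_mul, map_inv] at h1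
    rw [inv_mul_eq_one] at h1
    exact h1
  set η : G ⧸ K →* G ⧸ N := MonoidHom.mk' (fun l => q (χ0 (w l))) (by
    intro a b
    show q (χ0 (w (a * b))) = q (χ0 (w a)) * q (χ0 (w b))
    have h1 : q (χ0 (w (a * b))) = q (χ0 (w a * w b)) :=
      hηkey (w a * w b) (a * b) (by rw [map_mul, hw, hw])
    rw [h1, map_mul, map_mul]) with hηdef
  have hηT : ∀ t : G, t ∈ T → η (mk t) = π t := by
    intro t ht
    have h1 : χ0 (w (mk t)) = π₀ t * π₀ (rep ((π₀ t)⁻¹ * χ0 (w (mk t)))) := by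
      rw [hrep, mul_inv_cancel_left]
    have h2 : η (mk t) = q (χ0 (w (mk t))) := rfl
    rw [h2, h1, map_mul, hqπ, hqπ]
    have h3 : π (rep ((π₀ t)⁻¹ * χ0 (w (mk t)))) = 1 := by
      apply (QuotientGroup.eq_one_iff _).mpr
      exact hmemN _ (Finset.mem_union_right _ (Finset.mem_image.mpr ⟨t, ht, rfl⟩))
    rw [h3, mul_one]
  have hηmk : ∀ g : G, η (mk g) = π g := by
    intro g
    have hg : g ∈ Subgroup.closure (T : Set G) := by rw [hT]; exact Subgroup.mem_top g
    induction hg using Subgroup.closure_induction with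
    | mem x hx => exact hηT x hx
    | one => rw [map_one, map_one, map_one]
    | mul x y hx hy ihx ihy => rw [map_mul, map_mul, map_mul, ihx, ihy]
    | inv x hx ihx => rw [map_inv, map_inv, map_inv, ihx]
  intro g hg
  have h1 : π g = 1 := by
    have h2 : mk g = 1 := (QuotientGroup.eq_one_iff g).mpr hg
    rw [← hηmk g, h2, map_one]
  exact (QuotientGroup.eq_one_iff g).mp h1

theorem statement14 {ι : Type v} {Γ : ι → Type u} [∀ i, Group (Γ i)]
    (ω : Ultrafilter ℕ) (hω : ∀ s : Set ℕ, s.Finite → s ∉ ω)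
    {G : Type u} [Group G] [Group.FG G] {f : ℕ → ι} (φ : ∀ i, G →* Γ (f i))
    {n : ℕ} (P : Fin n → Subgroup (G ⧸ omegaKernel ω φ))
    (hfp : RelFinitelyPresented P)
    (Pt : Fin n → Subgroup G)
    (hPt : ∀ j, (Pt j).map (QuotientGroup.mk' (omegaKernel ω φ)) = P j)
    (hfac : ∀ j, {i : ℕ | ∀ g ∈ Pt j,
      QuotientGroup.mk' (omegaKernel ω φ) g = 1 → φ i g = 1} ∈ ω) :
    {i : ℕ | ∀ g : G, QuotientGroup.mk' (omegaKernel ω φ) g = 1 → φ i g = 1} ∈ ω := by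
  obtain ⟨F, hFK, hFN⟩ := key_lemma_s14 (omegaKernel ω φ) P hfp Pt hPt
  have hA : (⋂ j : Fin n, {i : ℕ | ∀ g ∈ Pt j,
      QuotientGroup.mk' (omegaKernel ω φ) g = 1 → φ i g = 1}) ∈ ω :=
    Filter.iInter_mem.mpr hfac
  have hB : (⋂ x ∈ F, {i : ℕ | φ i x = 1}) ∈ ω :=
    (Filter.biInter_finset_mem F).mpr fun x hx => hFK x hx
  filter_upwards [hA, hB] with i hiA hiB
  intro g hg
  have hgK : g ∈ omegaKernel ω φ := (QuotientGroup.eq_one_iff g).mp hg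
  have hgN := hFN hgK
  have hle : Subgroup.normalClosure ((F : Set G) ∪
      ⋃ j, ((Pt j : Set G) ∩ (omegaKernel ω φ : Set G))) ≤ (φ i).ker := by
    apply Subgroup.normalClosure_le_normal
    rintro x (hx | hx)
    · exact MonoidHom.mem_ker.mpr (Set.mem_iInter₂.mp hiB x hx)
    · obtain ⟨j, hxPt, hxK⟩ := Set.mem_iUnion.mp hx
      exact MonoidHom.mem_ker.mpr
        (Set.mem_iInter.mp hiA j x hxPt ((QuotientGroup.eq_one_iff x).mpr hxK))
  exact MonoidHom.mem_ker.mp (hle hgN)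
end

section
/- Let G be a group such that there is a constant N with the property that every element of G has at most N distinct conjugates in G (G is an N-BFC group). Then the commutator subgroup G' of G is finite, with order bounded by a constant depending only on N. -/
universe u v

open Subgroup
open scoped commutatorElement

namespace BFCProof

section Small

variable {α : Type*} {β : Type*} {γ : Type*}

/-- `S` is a finite set with at most `m` elements. -/
def Small (m : ℕ) (S : Set α) : Prop := S.Finite ∧ Nat.card S ≤ m

lemma Small.subset {m k : ℕ} {S T : Set α} (h : Small m S) (hTS : T ⊆ S) (hmk : m ≤ k) :
    Small k T := by
  refine ⟨h.1.subset hTS, le_trans (le_trans ?_ h.2) hmk⟩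
  exact Nat.card_mono h.1 hTS

lemma small_image2 (f : α → β → γ) {m k : ℕ} {S : Set α} {T : Set β}
    (hS : Small m S) (hT : Small k T) : Small (m * k) (Set.image2 f S T) := by
  have hfin : (Set.image2 f S T).Finite := Set.Finite.image2 f hS.1 hT.1
  refine ⟨hfin, ?_⟩
  haveI := hS.1.to_subtype
  haveI := hT.1.to_subtype
  have hsurj : Function.Surjective
      (fun p : S × T => (⟨f p.1 p.2, Set.mem_image2_of_mem p.1.2 p.2.2⟩ : Set.image2 f S T)) := by
    rintro ⟨y, hy⟩
    obtain ⟨a, ha, b, hb, rfl⟩ := hy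
    exact ⟨(⟨a, ha⟩, ⟨b, hb⟩), rfl⟩
  calc Nat.card (Set.image2 f S T) ≤ Nat.card (S × T) :=
        Nat.card_le_card_of_surjective _ hsurj
    _ = Nat.card S * Nat.card T := Nat.card_prod _ _
    _ ≤ m * k := Nat.mul_le_mul hS.2 hT.2

lemma small_iUnion {ι : Type*} [Finite ι] {m : ℕ} {f : ι → Set α}
    (h : ∀ i, Small m (f i)) : Small (Nat.card ι * m) (⋃ i, f i) := by
  have hfin : (⋃ i, f i).Finite := Set.finite_iUnion (fun i => (h i).1)
  refine ⟨hfin, ?_⟩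
  haveI := hfin.to_subtype
  rcases Nat.eq_zero_or_pos m with hm | hm
  · -- each f i is empty
    have : ∀ i, f i = ∅ := by
      intro i
      haveI := (h i).1.to_subtype
      have hc : Nat.card (f i) = 0 := le_antisymm (hm ▸ (h i).2) (Nat.zero_le _)
      have hie : IsEmpty (f i) := by
        rw [Nat.card_eq_zero] at hc
        rcases hc with hc | hc
        · exact hc
        · exact absurd ((h i).1.to_subtype) (by rw [not_finite_iff_infinite]; exact hc)
      exact Set.eq_empty_iff_forall_notMem.mpr (fun x hx => hie.false ⟨x, hx⟩)
    have : (⋃ i, f i) = ∅ := by simp [this]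
    simp [this]
  · -- build injection into ι × Fin m
    have hexists : ∀ i, ∃ e : α → Fin m, ∀ x y : f i, e x = e y → x = y := by
      intro i
      haveI := (h i).1.to_subtype
      obtain ⟨n, ⟨e⟩⟩ := Finite.exists_equiv_fin (f i)
      have hn : n ≤ m := by
        have : Nat.card (f i) = n := by
          rw [Nat.card_congr e]
          simp [Nat.card_eq_fintype_card]
        exact this ▸ (h i).2
      classical
      refine ⟨fun x => if hx : x ∈ f i then Fin.castLE hn (e ⟨x, hx⟩) else ⟨0, hm⟩, ?_⟩
      intro x y hxy
      simp only at hxy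
      rw [dif_pos x.2, dif_pos y.2] at hxy
      have h3 : e ⟨(x : α), x.2⟩ = e ⟨(y : α), y.2⟩ := Fin.castLE_injective hn hxy
      have h4 := e.injective h3
      have h5 : (x : α) = (y : α) := Subtype.ext_iff.mp h4
      exact Subtype.ext h5
    choose e he using hexists
    choose idx hidx using fun (x : ↥(⋃ i, f i)) => Set.mem_iUnion.mp x.2
    have hinj : Function.Injective
        (fun x : ↥(⋃ i, f i) => ((idx x, e (idx x) x.1) : ι × Fin m)) := by
      intro x y hxy
      have h1 : idx x = idx y := congrArg Prod.fst hxy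
      have h2 : e (idx x) x.1 = e (idx y) y.1 := congrArg Prod.snd hxy
      rw [← h1] at h2
      have hy' : (y : α) ∈ f (idx x) := h1 ▸ hidx y
      have h6 := he (idx x) ⟨x.1, hidx x⟩ ⟨y.1, hy'⟩ h2
      have h7 := congrArg Subtype.val h6
      exact Subtype.ext h7
    calc Nat.card ↥(⋃ i, f i) ≤ Nat.card (ι × Fin m) :=
          Nat.card_le_card_of_injective _ hinj
      _ = Nat.card ι * m := by simp [Nat.card_prod, Nat.card_eq_fintype_card]

lemma small_union {m k : ℕ} {S T : Set α} (hS : Small m S) (hT : Small k T) :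
    Small (m + k) (S ∪ T) := by
  refine ⟨hS.1.union hT.1, ?_⟩
  rw [Nat.card_coe_set_eq]
  refine le_trans (Set.ncard_union_le S T) ?_
  rw [← Nat.card_coe_set_eq, ← Nat.card_coe_set_eq]
  exact add_le_add hS.2 hT.2

end Small

section Cls

variable {G : Type*} [Group G]

/-- The conjugacy class of `g`. -/
def cls (g : G) : Set G := {x : G | ∃ h : G, h⁻¹ * g * h = x}

lemma self_mem_cls (g : G) : g ∈ cls g := ⟨1, by group⟩

lemma conj_mem_cls (g h : G) : h⁻¹ * g * h ∈ cls g := ⟨h, rfl⟩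

lemma cls_eq_of_mem {g a : G} (ha : a ∈ cls g) : cls a = cls g := by
  obtain ⟨h, rfl⟩ := ha
  ext x
  constructor
  · rintro ⟨k, rfl⟩
    exact ⟨h * k, by group⟩
  · rintro ⟨k, rfl⟩
    exact ⟨h⁻¹ * k, by group⟩

/-- The quotient by a centralizer is equivalent to the conjugacy class. -/
noncomputable def quotCentralizerEquivCls (t : G) :
    (G ⧸ Subgroup.centralizer {t}) ≃ cls t := by
  refine Equiv.ofBijective (fun q => Quotient.liftOn' q
    (fun h => (⟨h * t * h⁻¹, ⟨h⁻¹, by group⟩⟩ : cls t)) ?_) ⟨?_, ?_⟩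
  · intro a b hab
    have hc : a⁻¹ * b ∈ Subgroup.centralizer {t} := QuotientGroup.leftRel_apply.mp hab
    have hc' : t * (a⁻¹ * b) = (a⁻¹ * b) * t :=
      Subgroup.mem_centralizer_iff.mp hc t rfl
    refine Subtype.ext ?_
    show a * t * a⁻¹ = b * t * b⁻¹
    have : a * (t * (a⁻¹ * b)) * b⁻¹ = a * ((a⁻¹ * b) * t) * b⁻¹ := by rw [hc']
    calc a * t * a⁻¹ = a * (t * (a⁻¹ * b)) * b⁻¹ := by group
      _ = a * ((a⁻¹ * b) * t) * b⁻¹ := by rw [hc']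
      _ = b * t * b⁻¹ := by group
  · intro q q'
    refine Quotient.inductionOn₂' q q' ?_
    intro a b hab
    have hab' : a * t * a⁻¹ = b * t * b⁻¹ := Subtype.ext_iff.mp hab
    refine Quotient.sound' (QuotientGroup.leftRel_apply.mpr ?_)
    refine Subgroup.mem_centralizer_iff.mpr ?_
    intro y hy
    rcases hy with rfl
    calc y * (a⁻¹ * b) = a⁻¹ * (a * y * a⁻¹) * b := by group
      _ = a⁻¹ * (b * y * b⁻¹) * b := by rw [hab']
      _ = (a⁻¹ * b) * y := by group
  · rintro ⟨x, h, rfl⟩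
    refine ⟨QuotientGroup.mk h⁻¹, Subtype.ext ?_⟩
    show h⁻¹ * t * h⁻¹⁻¹ = h⁻¹ * t * h
    rw [inv_inv]

lemma centralizer_finite_quot {t : G} (h : (cls t).Finite) :
    Finite (G ⧸ Subgroup.centralizer {t}) := by
  haveI := h.to_subtype
  exact Finite.of_equiv _ (quotCentralizerEquivCls t).symm

lemma centralizer_index_le {t : G} {n : ℕ} (h : (cls t).Finite)
    (hc : Nat.card (cls t) ≤ n) : (Subgroup.centralizer {t}).index ≤ n := by
  rw [Subgroup.index, Nat.card_congr (quotCentralizerEquivCls t)]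
  exact hc

lemma centralizer_finiteIndex {t : G} (h : (cls t).Finite) :
    (Subgroup.centralizer {t}).FiniteIndex := by
  haveI := centralizer_finite_quot h
  constructor
  rw [Subgroup.index]
  haveI : Nonempty (G ⧸ Subgroup.centralizer {t}) := ⟨QuotientGroup.mk 1⟩
  exact Nat.card_pos.ne'

end Cls

section CoreFin

variable {G : Type*} [Group G]

/-- Schur-type bound for the closure of a small conjugation-closed set. -/
def SB (m : ℕ) : ℕ := Subgroup.cardCommutatorBound ((m ^ m) ^ 2)

lemma ccb_mono {a b : ℕ} (hab : a ≤ b) :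
    Subgroup.cardCommutatorBound a ≤ Subgroup.cardCommutatorBound b := by
  unfold Subgroup.cardCommutatorBound
  rcases Nat.eq_zero_or_pos a with rfl | ha
  · rcases Nat.eq_zero_or_pos b with rfl | hb
    · exact le_refl _
    · have hbase : 1 ≤ b ^ (2 * b) := Nat.one_le_pow _ _ hb
      calc ((0:ℕ) ^ (2 * 0)) ^ ((0:ℕ) ^ (2 * 0 + 1) + 1) = 1 := by norm_num
        _ ≤ (b ^ (2 * b)) ^ (b ^ (2 * b + 1) + 1) := Nat.one_le_pow _ _ hbase
  · have hb : 1 ≤ b := le_trans ha hab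
    have h1 : a ^ (2 * a) ≤ b ^ (2 * b) :=
      le_trans (Nat.pow_le_pow_left hab _) (Nat.pow_le_pow_right hb (by omega))
    have h2 : a ^ (2 * a + 1) + 1 ≤ b ^ (2 * b + 1) + 1 := by
      have := le_trans (Nat.pow_le_pow_left hab (2 * a + 1))
        (Nat.pow_le_pow_right hb (show 2 * a + 1 ≤ 2 * b + 1 by omega))
      omega
    exact le_trans (Nat.pow_le_pow_left h1 _)
      (Nat.pow_le_pow_right (Nat.one_le_pow _ _ hb) h2)

lemma commutator_central_right {K : Type*} [Group K] (a b z : K)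
    (hz : ∀ g : K, g * z = z * g) : ⁅a * z, b⁆ = ⁅a, b⁆ := by
  rw [commutatorElement_def, commutatorElement_def, mul_inv_rev]
  calc a * z * b * (z⁻¹ * a⁻¹) * b⁻¹ = a * (z * b) * z⁻¹ * a⁻¹ * b⁻¹ := by group
    _ = a * (b * z) * z⁻¹ * a⁻¹ * b⁻¹ := by rw [hz b]
    _ = a * b * a⁻¹ * b⁻¹ := by group

lemma commutator_central_left {K : Type*} [Group K] (a b w : K)
    (hw : ∀ g : K, g * w = w * g) : ⁅a, b * w⁆ = ⁅a, b⁆ := by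
  rw [commutatorElement_def, commutatorElement_def, mul_inv_rev]
  calc a * (b * w) * a⁻¹ * (w⁻¹ * b⁻¹) = a * (b * w) * a⁻¹ * w⁻¹ * b⁻¹ := by group
    _ = a * b * (w * a⁻¹) * w⁻¹ * b⁻¹ := by group
    _ = a * b * (a⁻¹ * w) * w⁻¹ * b⁻¹ := by rw [hw a⁻¹]
    _ = a * b * a⁻¹ * b⁻¹ := by group

theorem corefin (X : Set G) (m : ℕ) (hfin : X.Finite) (hcard : Nat.card X ≤ m)
    (hconj : ∀ x ∈ X, ∀ h : G, h⁻¹ * x * h ∈ X) :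
    Finite (commutatorSet ↥(Subgroup.closure X)) ∧
      Nat.card (commutatorSet ↥(Subgroup.closure X)) ≤ (m ^ m) ^ 2 := by
  classical
  set K := ↥(Subgroup.closure X) with hK
  set T : Set K := (Subtype.val : K → G) ⁻¹' X with hTdef
  have hTfin : T.Finite := Set.Finite.preimage (Subtype.val_injective.injOn) hfin
  haveI := hfin.to_subtype
  -- classes in K of elements of X are small
  have hclsK : ∀ t : K, (t : G) ∈ X → (cls t).Finite ∧ Nat.card (cls t) ≤ m := by
    intro t ht
    have hval : ∀ y : K, y ∈ cls t → (y : G) ∈ X := by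
      rintro y ⟨k, rfl⟩
      have h0 : ((k⁻¹ * t * k : K) : G) = (k : G)⁻¹ * (t : G) * (k : G) := rfl
      rw [h0]
      exact hconj _ ht _
    have hinj : Function.Injective (fun y : cls t => (⟨((y : K) : G), hval y y.2⟩ : X)) := by
      intro y y' h
      have h2 := congrArg Subtype.val h
      exact Subtype.ext (Subtype.ext h2)
    have hfin' : Finite (cls t) := Finite.of_injective _ hinj
    refine ⟨Set.finite_coe_iff.mp hfin', ?_⟩
    exact le_trans (Nat.card_le_card_of_injective _ hinj) hcard
  -- finite intersections of centralizers
  have key : ∀ F : Finset K, (∀ t ∈ F, (t : G) ∈ X) →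
      (F.inf fun t => Subgroup.centralizer {t}).FiniteIndex ∧
        (F.inf fun t => Subgroup.centralizer {t}).index ≤ m ^ F.card := by
    intro F
    induction F using Finset.induction_on with
    | empty =>
      intro _
      rw [Finset.inf_empty]
      exact ⟨⟨by simp [Subgroup.index_top]⟩, by simp [Subgroup.index_top]⟩
    | @insert a F' ha ih =>
      intro hmem
      obtain ⟨ih1, ih2⟩ := ih (fun t ht => hmem t (Finset.mem_insert_of_mem ht))
      have hacls := hclsK a (hmem a (Finset.mem_insert_self a F'))
      have hafi : (Subgroup.centralizer {a}).FiniteIndex := centralizer_finiteIndex hacls.1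
      haveI := ih1
      haveI := hafi
      rw [Finset.inf_insert]
      refine ⟨inferInstance, ?_⟩
      refine le_trans Subgroup.index_inf_le ?_
      rw [Finset.card_insert_of_notMem ha, pow_succ]
      have h1 : (Subgroup.centralizer {a}).index ≤ m := centralizer_index_le hacls.1 hacls.2
      calc (Subgroup.centralizer {a}).index * (F'.inf fun t => Subgroup.centralizer {t}).index
          ≤ m * m ^ F'.card := Nat.mul_le_mul h1 ih2
        _ = m ^ F'.card * m := Nat.mul_comm _ _
  set F := hTfin.toFinset with hFdef
  have hFX : ∀ t ∈ F, (t : G) ∈ X := fun t ht => hTfin.mem_toFinset.mp ht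
  obtain ⟨hCfi, hCle⟩ := key F hFX
  set CF := F.inf fun t => Subgroup.centralizer {t} with hCFdef
  have hTX : Nat.card T = Nat.card X := by
    refine Nat.card_congr (Equiv.ofBijective (fun t => (⟨((t : K) : G), t.2⟩ : X)) ⟨?_, ?_⟩)
    · intro t t' h
      have h2 := congrArg Subtype.val h
      exact Subtype.ext (Subtype.ext h2)
    · rintro ⟨x, hx⟩
      exact ⟨⟨⟨x, Subgroup.subset_closure hx⟩, hx⟩, rfl⟩
  have hFcard : F.card ≤ m := by
    have : F.card = Nat.card T := by
      rw [hFdef, ← Set.ncard_eq_toFinset_card T hTfin, Nat.card_coe_set_eq]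
    rw [this, hTX]; exact hcard
  have hCcenter : CF ≤ Subgroup.center K := by
    intro k hk
    rw [Subgroup.mem_center_iff]
    intro y
    have hy : y ∈ Subgroup.closure T := by
      rw [hTdef, Subgroup.closure_closure_coe_preimage]; trivial
    induction hy using Subgroup.closure_induction with
    | mem t ht =>
      have h5 : k ∈ Subgroup.centralizer {t} :=
        SetLike.le_def.mp (Finset.inf_le (hTfin.mem_toFinset.mpr ht)) hk
      exact Subgroup.mem_centralizer_iff.mp h5 t rfl
    | one => rw [one_mul, mul_one]
    | mul a b _ _ hab hbb =>
      show Commute (a * b) k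
      exact Commute.mul_left hab hbb
    | inv a _ hab =>
      show Commute a⁻¹ k
      exact Commute.inv_left hab
  have hZfi : (Subgroup.center K).FiniteIndex :=
    ⟨ne_zero_of_dvd_ne_zero hCfi.index_ne_zero (Subgroup.index_dvd_of_le hCcenter)⟩
  have hZle : (Subgroup.center K).index ≤ m ^ m := by
    have h1 : (Subgroup.center K).index ≤ CF.index :=
      Nat.le_of_dvd (Nat.pos_of_ne_zero hCfi.index_ne_zero) (Subgroup.index_dvd_of_le hCcenter)
    have h2 : m ^ F.card ≤ m ^ m := by
      rcases Nat.eq_zero_or_pos m with rfl | hm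
      · have : F.card = 0 := Nat.le_zero.mp hFcard
        rw [this]
      · exact Nat.pow_le_pow_right hm hFcard
    exact le_trans h1 (le_trans hCle h2)
  haveI hQfin : Finite (K ⧸ Subgroup.center K) :=
    Nat.finite_of_card_ne_zero hZfi.index_ne_zero
  have hQcard : Nat.card (K ⧸ Subgroup.center K) ≤ m ^ m := hZle
  -- surjection onto the commutator set
  set Q := K ⧸ Subgroup.center K with hQdef
  have hsub : commutatorSet K ⊆
      Set.range (fun p : Q × Q => ⁅(p.1.out : K), (p.2.out : K)⁆) := by
    rintro c ⟨a, b, rfl⟩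
    refine ⟨(QuotientGroup.mk a, QuotientGroup.mk b), ?_⟩
    show ⁅(QuotientGroup.mk a : Q).out, (QuotientGroup.mk b : Q).out⁆ = ⁅a, b⁆
    have hza : a⁻¹ * (QuotientGroup.mk a : Q).out ∈ Subgroup.center K :=
      QuotientGroup.eq.mp ((QuotientGroup.mk a : Q).out_eq').symm
    have hzb : b⁻¹ * (QuotientGroup.mk b : Q).out ∈ Subgroup.center K :=
      QuotientGroup.eq.mp ((QuotientGroup.mk b : Q).out_eq').symm
    have ha' : (QuotientGroup.mk a : Q).out = a * (a⁻¹ * (QuotientGroup.mk a : Q).out) := by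
      exact (mul_inv_cancel_left a _).symm
    have hb' : (QuotientGroup.mk b : Q).out = b * (b⁻¹ * (QuotientGroup.mk b : Q).out) := by
      exact (mul_inv_cancel_left b _).symm
    rw [ha', hb', commutator_central_right _ _ _
        (fun g => Subgroup.mem_center_iff.mp hza g),
      commutator_central_left _ _ _ (fun g => Subgroup.mem_center_iff.mp hzb g)]
  have hrangefin : (Set.range (fun p : Q × Q => ⁅(p.1.out : K), (p.2.out : K)⁆)).Finite :=
    Set.finite_range _
  constructor
  · exact (hrangefin.subset hsub).to_subtype
  · calc Nat.card (commutatorSet K) ≤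
        Nat.card (Set.range (fun p : Q × Q => ⁅(p.1.out : K), (p.2.out : K)⁆)) :=
          Nat.card_mono hrangefin hsub
      _ ≤ Nat.card (Q × Q) := Finite.card_range_le _
      _ = Nat.card Q * Nat.card Q := Nat.card_prod _ _
      _ ≤ (m ^ m) ^ 2 := by rw [pow_two]; exact Nat.mul_le_mul hQcard hQcard

end CoreFin

section Abgen

lemma abgen {A : Type*} [CommGroup A] (S : Set A) (m E : ℕ) (hfin : S.Finite)
    (hcard : Nat.card S ≤ m) (hgen : Subgroup.closure S = ⊤) (hE : 1 ≤ E)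
    (hord : ∀ s ∈ S, s ^ E = 1) : Finite A ∧ Nat.card A ≤ E ^ m := by
  classical
  set F := hfin.toFinset with hFdef
  have hFS : ∀ s : {x // x ∈ F}, (s : A) ∈ S := fun s => hfin.mem_toFinset.mp s.2
  set Ψ : ({ x // x ∈ F } → Fin E) → A := fun k => ∏ t ∈ F.attach, (t : A) ^ ((k t : ℕ))
    with hΨ
  have hsurj : Function.Surjective Ψ := by
    intro a
    have ha : a ∈ Subgroup.closure S := hgen ▸ Subgroup.mem_top a
    induction ha using Subgroup.closure_induction with
    | mem s hs =>
      have hsF : s ∈ F := hfin.mem_toFinset.mpr hs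
      refine ⟨fun t => if (t : A) = s then ⟨1 % E, Nat.mod_lt _ hE⟩ else ⟨0, hE⟩, ?_⟩
      rw [hΨ]
      have h1 : ∀ b ∈ F.attach, b ≠ (⟨s, hsF⟩ : {x // x ∈ F}) →
          (b : A) ^ (((if (b : A) = s then (⟨1 % E, Nat.mod_lt _ hE⟩ : Fin E)
            else ⟨0, hE⟩) : Fin E) : ℕ) = 1 := by
        intro b _ hb
        rw [if_neg (fun hvb => hb (Subtype.ext hvb))]
        exact pow_zero _
      refine (Finset.prod_eq_single_of_mem (⟨s, hsF⟩ : {x // x ∈ F})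
        (Finset.mem_attach F _) h1).trans ?_
      rw [if_pos rfl]
      show s ^ (1 % E) = s
      rw [← pow_eq_pow_mod _ (hord s hs), pow_one]
    | one =>
      refine ⟨fun _ => ⟨0, hE⟩, ?_⟩
      rw [hΨ]
      exact Finset.prod_eq_one (fun t _ => pow_zero _)
    | mul x y hx hy ihx ihy =>
      obtain ⟨k, rfl⟩ := ihx
      obtain ⟨k', rfl⟩ := ihy
      refine ⟨fun t => ⟨((k t : ℕ) + (k' t : ℕ)) % E, Nat.mod_lt _ hE⟩, ?_⟩
      rw [hΨ, ← Finset.prod_mul_distrib]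
      refine Finset.prod_congr rfl ?_
      intro t _
      show (t : A) ^ ((((k t : ℕ) + (k' t : ℕ)) % E)) = (t : A) ^ (k t : ℕ) * (t : A) ^ (k' t : ℕ)
      rw [← pow_add, ← pow_eq_pow_mod _ (hord _ (hFS t))]
    | inv x hx ihx =>
      obtain ⟨k, rfl⟩ := ihx
      refine ⟨fun t => ⟨(E - (k t : ℕ)) % E, Nat.mod_lt _ hE⟩, ?_⟩
      rw [hΨ, ← Finset.prod_inv_distrib]
      refine Finset.prod_congr rfl ?_
      intro t _
      show (t : A) ^ ((E - (k t : ℕ)) % E) = ((t : A) ^ (k t : ℕ))⁻¹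
      rw [← pow_eq_pow_mod _ (hord _ (hFS t))]
      refine eq_inv_of_mul_eq_one_left ?_
      rw [← pow_add, Nat.sub_add_cancel (le_of_lt (k t).2), hord _ (hFS t)]
  haveI hfA : Finite A := Finite.of_surjective Ψ hsurj
  refine ⟨hfA, ?_⟩
  have hFcard : F.card ≤ m := by
    have : F.card = Nat.card S := by
      rw [hFdef, ← Set.ncard_eq_toFinset_card S hfin, Nat.card_coe_set_eq]
    rw [this]; exact hcard
  calc Nat.card A ≤ Nat.card ({x // x ∈ F} → Fin E) :=
        Nat.card_le_card_of_surjective Ψ hsurj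
    _ = E ^ F.card := by
        rw [Nat.card_eq_fintype_card, Fintype.card_fun]
        simp
    _ ≤ E ^ m := Nat.pow_le_pow_right hE hFcard

end Abgen

section BD

variable {G : Type*} [Group G]

/-- Bounded Dietzmann-type lemma: the closure of a small conjugation-closed set of
elements of bounded order is finite of bounded cardinality. -/
theorem bd (X : Set G) (m E : ℕ) (hE : 1 ≤ E) (hfin : X.Finite) (hcard : Nat.card X ≤ m)
    (hconj : ∀ x ∈ X, ∀ h : G, h⁻¹ * x * h ∈ X) (hord : ∀ x ∈ X, x ^ E = 1) :
    Finite ↥(Subgroup.closure X) ∧ Nat.card ↥(Subgroup.closure X) ≤ SB m * E ^ m := by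
  obtain ⟨hcfin, hccard⟩ := corefin X m hfin hcard hconj
  set K := ↥(Subgroup.closure X) with hKdef
  haveI : Finite (commutatorSet K) := hcfin
  have hschur : Nat.card (_root_.commutator K) ≤ SB m :=
    le_trans (Subgroup.card_commutator_le_of_finite_commutatorSet K) (ccb_mono hccard)
  set T : Set K := (Subtype.val : K → G) ⁻¹' X with hTdef
  have hTfin : T.Finite := Set.Finite.preimage (Subtype.val_injective.injOn) hfin
  haveI := hfin.to_subtype
  haveI := hTfin.to_subtype
  have hTX : Nat.card T = Nat.card X := by
    refine Nat.card_congr (Equiv.ofBijective (fun t => (⟨((t : K) : G), t.2⟩ : X)) ⟨?_, ?_⟩)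
    · intro t t' h
      have h2 := congrArg Subtype.val h
      exact Subtype.ext (Subtype.ext h2)
    · rintro ⟨x, hx⟩
      exact ⟨⟨⟨x, Subgroup.subset_closure hx⟩, hx⟩, rfl⟩
  have hTgen : Subgroup.closure T = ⊤ := Subgroup.closure_closure_coe_preimage
  have hφsurj : Function.Surjective (Abelianization.of : K → Abelianization K) := by
    intro a
    exact Quotient.inductionOn' a (fun z => ⟨z, rfl⟩)
  have hgenA : Subgroup.closure ((Abelianization.of : K →* Abelianization K) '' T) = ⊤ := by
    rw [← MonoidHom.map_closure, hTgen, Subgroup.map_top_of_surjective _ hφsurj]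
  have himgfin : ((Abelianization.of : K →* Abelianization K) '' T).Finite := hTfin.image _
  have himgcard : Nat.card ((Abelianization.of : K →* Abelianization K) '' T) ≤ m := by
    refine le_trans (Finite.card_image_le _) ?_
    rw [hTX]; exact hcard
  have hordA : ∀ y ∈ (Abelianization.of : K →* Abelianization K) '' T, y ^ E = 1 := by
    rintro y ⟨t, ht, rfl⟩
    rw [← map_pow]
    have htE : t ^ E = 1 := by
      refine Subtype.ext ?_
      have h1 : ((t ^ E : K) : G) = ((t : K) : G) ^ E := by push_cast; rfl
      rw [h1, hord _ ht]
      rfl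
    rw [htE, map_one]
  obtain ⟨hAfin, hAcard⟩ := abgen _ m E himgfin himgcard hgenA hE hordA
  haveI : Finite (Abelianization K) := hAfin
  haveI hq : Finite (K ⧸ _root_.commutator K) := hAfin
  haveI hcommfin : Finite ↥(_root_.commutator K) := inferInstance
  haveI hKfin : Finite K :=
    Finite.of_equiv _ (Subgroup.groupEquivQuotientProdSubgroup
      (s := _root_.commutator K)).symm
  refine ⟨hKfin, ?_⟩
  rw [Subgroup.card_eq_card_quotient_mul_card_subgroup (_root_.commutator K)]
  have h2 : Nat.card (K ⧸ _root_.commutator K) ≤ E ^ m := hAcard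
  calc Nat.card (K ⧸ _root_.commutator K) * Nat.card ↥(_root_.commutator K)
      ≤ E ^ m * SB m := Nat.mul_le_mul h2 hschur
    _ = SB m * E ^ m := Nat.mul_comm _ _

/-- The uniform exponent killing all commutators in an `N`-BFC group. -/
def EE (N : ℕ) : ℕ := Nat.factorial (SB (2 * N))

lemma EE_pos (N : ℕ) : 1 ≤ EE N := Nat.factorial_pos _

/-- Order bound: in an `N`-BFC group, every commutator is killed by `EE N`. -/
theorem ob {N : ℕ} (hN : ∀ g : G, (cls g).Finite ∧ Nat.card (cls g) ≤ N)
    (x g : G) : (x⁻¹ * g⁻¹ * x * g) ^ EE N = 1 := by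
  set X := cls x ∪ cls g with hX
  have hfin : X.Finite := (hN x).1.union (hN g).1
  have hcard : Nat.card X ≤ 2 * N := by
    have h1 := small_union (⟨(hN x).1, (hN x).2⟩ : Small N (cls x))
      (⟨(hN g).1, (hN g).2⟩ : Small N (cls g))
    exact le_trans h1.2 (by omega)
  have hconj : ∀ y ∈ X, ∀ h : G, h⁻¹ * y * h ∈ X := by
    rintro y (hy | hy) h
    · exact Or.inl ((cls_eq_of_mem hy) ▸ conj_mem_cls y h)
    · exact Or.inr ((cls_eq_of_mem hy) ▸ conj_mem_cls y h)
  obtain ⟨hcfin, hccard⟩ := corefin X (2 * N) hfin hcard hconj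
  set K := ↥(Subgroup.closure X) with hKdef
  haveI : Finite (commutatorSet K) := hcfin
  haveI : Finite ↥(_root_.commutator K) := inferInstance
  have hcomm : Nat.card ↥(_root_.commutator K) ≤ SB (2 * N) :=
    le_trans (Subgroup.card_commutator_le_of_finite_commutatorSet K) (ccb_mono hccard)
  have hx : x ∈ Subgroup.closure X := Subgroup.subset_closure (Or.inl (self_mem_cls x))
  have hg : g ∈ Subgroup.closure X := Subgroup.subset_closure (Or.inr (self_mem_cls g))
  set xK : K := ⟨x, hx⟩ with hxK
  set gK : K := ⟨g, hg⟩ with hgK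
  have hmem : ⁅xK⁻¹, gK⁻¹⁆ ∈ _root_.commutator K := by
    rw [_root_.commutator_def]
    exact Subgroup.commutator_mem_commutator (Subgroup.mem_top _) (Subgroup.mem_top _)
  set c : ↥(_root_.commutator K) := ⟨⁅xK⁻¹, gK⁻¹⁆, hmem⟩ with hc
  haveI : Nonempty ↥(_root_.commutator K) := ⟨1⟩
  have hcpow : c ^ Nat.card ↥(_root_.commutator K) = 1 := pow_card_eq_one'
  have hdvd : Nat.card ↥(_root_.commutator K) ∣ EE N :=
    Nat.dvd_factorial Nat.card_pos hcomm
  obtain ⟨d, hd⟩ := hdvd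
  have hcE : c ^ EE N = 1 := by rw [hd, pow_mul, hcpow, one_pow]
  have hval : ((⁅xK⁻¹, gK⁻¹⁆ : K) : G) = x⁻¹ * g⁻¹ * x * g := by
    rw [commutatorElement_def]
    push_cast
    rw [inv_inv, inv_inv]
    rfl
  have h3 := congrArg (fun z : ↥(_root_.commutator K) => ((z : K) : G)) hcE
  rw [SubgroupClass.coe_pow, SubgroupClass.coe_pow] at h3
  have hcval : ((((c : ↥(_root_.commutator K)) : K) : G)) = x⁻¹ * g⁻¹ * x * g := hval
  rw [hcval] at h3
  simpa using h3

end BD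

section Main

variable {G : Type*} [Group G]

/-- The basic commutator `x⁻¹ * g⁻¹ * x * g`. -/
def cc (x g : G) : G := x⁻¹ * g⁻¹ * x * g

/-- All commutators whose first entry is conjugate to `x`. -/
def RowC (x : G) : Set G := Set.image2 (fun a b => a⁻¹ * b) (cls x) (cls x)

lemma cc_self_mem_rowC (x g : G) : cc x g ∈ RowC x :=
  ⟨x, self_mem_cls x, g⁻¹ * x * g, conj_mem_cls x g, by unfold cc; group⟩

lemma rowC_conj {x y : G} (hy : y ∈ RowC x) (w : G) : w⁻¹ * y * w ∈ RowC x := by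
  obtain ⟨a, ha, b, hb, rfl⟩ := hy
  refine ⟨w⁻¹ * a * w, (cls_eq_of_mem ha) ▸ conj_mem_cls a w,
    w⁻¹ * b * w, (cls_eq_of_mem hb) ▸ conj_mem_cls b w, by group⟩

lemma cc_mul_left (u w g : G) : cc (u * w) g = (w⁻¹ * cc u g * w) * cc w g := by
  unfold cc; group

lemma cc_one_left (g : G) : cc 1 g = 1 := by unfold cc; group

lemma mem_centralizer_iff_cc {w g : G} :
    w ∈ Subgroup.centralizer {g} ↔ cc w g = 1 := by
  rw [Subgroup.mem_centralizer_singleton_iff]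
  constructor
  · intro h
    unfold cc
    rw [show w⁻¹ * g⁻¹ * w * g = w⁻¹ * g⁻¹ * (w * g) from by group, h]
    group
  · intro h
    have h2 := congrArg (fun z => g * w * z) h
    simp only [mul_one] at h2
    unfold cc at h2
    rw [show g * w * (w⁻¹ * g⁻¹ * w * g) = w * g from by group] at h2
    exact h2

section WithBound

variable (N : ℕ)

lemma rowC_small (hN : ∀ g : G, (cls g).Finite ∧ Nat.card (cls g) ≤ N) (x : G) :
    Small (N * N) (RowC x) :=
  small_image2 _ ⟨(hN x).1, (hN x).2⟩ ⟨(hN x).1, (hN x).2⟩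

lemma rowC_pow_eq_one (hN : ∀ g : G, (cls g).Finite ∧ Nat.card (cls g) ≤ N) (x : G) :
    ∀ y ∈ RowC x, y ^ EE N = 1 := by
  rintro y ⟨a, ha, b, hb, rfl⟩
  have hb' : b ∈ cls a := (cls_eq_of_mem ha).symm ▸ hb
  obtain ⟨k, rfl⟩ := hb'
  have h1 : a⁻¹ * (k⁻¹ * a * k) = cc a k := by unfold cc; group
  show (a⁻¹ * (k⁻¹ * a * k)) ^ EE N = 1
  rw [h1]
  exact ob hN a k

end WithBound

/-- The union of rows used at stage `i`. -/
def SS (xs : ℕ → G) (i : ℕ) : Set G := ⋃ l : Fin i, RowC (xs l)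

/-- The finite normal "junk" subgroup at stage `i`. -/
def HH (xs : ℕ → G) (i : ℕ) : Subgroup G := Subgroup.closure (SS xs i)

/-- The iterated centralizer subgroup. -/
def VV (gs : ℕ → G) : ℕ → Subgroup G
  | 0 => ⊤
  | i + 1 => VV gs i ⊓ Subgroup.centralizer {gs i}

lemma SS_mono (xs : ℕ → G) {i j : ℕ} (hij : i ≤ j) : SS xs i ⊆ SS xs j := by
  intro y hy
  obtain ⟨l, hl⟩ := Set.mem_iUnion.mp hy
  exact Set.mem_iUnion.mpr ⟨⟨l, lt_of_lt_of_le l.2 hij⟩, hl⟩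

lemma HH_mono (xs : ℕ → G) {i j : ℕ} (hij : i ≤ j) : HH xs i ≤ HH xs j :=
  Subgroup.closure_mono (SS_mono xs hij)

lemma SS_conj (xs : ℕ → G) (i : ℕ) {y : G} (hy : y ∈ SS xs i) (w : G) :
    w⁻¹ * y * w ∈ SS xs i := by
  obtain ⟨l, hl⟩ := Set.mem_iUnion.mp hy
  exact Set.mem_iUnion.mpr ⟨l, rowC_conj hl w⟩

lemma HH_conj (xs : ℕ → G) (i : ℕ) {y : G} (hy : y ∈ HH xs i) (w : G) :
    w⁻¹ * y * w ∈ HH xs i := by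
  induction hy using Subgroup.closure_induction with
  | mem t ht => exact Subgroup.subset_closure (SS_conj xs i ht w)
  | one => simpa using Subgroup.one_mem _
  | mul a b _ _ iha ihb =>
    have : w⁻¹ * (a * b) * w = (w⁻¹ * a * w) * (w⁻¹ * b * w) := by group
    rw [this]
    exact Subgroup.mul_mem _ iha ihb
  | inv a _ iha =>
    have : w⁻¹ * a⁻¹ * w = (w⁻¹ * a * w)⁻¹ := by group
    rw [this]
    exact Subgroup.inv_mem _ iha

lemma HH_conj_rev (xs : ℕ → G) (i : ℕ) {y : G} (w : G)
    (hy : w⁻¹ * y * w ∈ HH xs i) : y ∈ HH xs i := by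
  have := HH_conj xs i hy w⁻¹
  have h2 : w⁻¹⁻¹ * (w⁻¹ * y * w) * w⁻¹ = y := by group
  rwa [h2] at this

lemma rowC_subset_SS (xs : ℕ → G) {l i : ℕ} (hl : l < i) : RowC (xs l) ⊆ SS xs i :=
  fun y hy => Set.mem_iUnion.mpr ⟨⟨l, hl⟩, hy⟩

section Bounds

variable (N : ℕ)

/-- Size bound for the sets `SS`. -/
def mSn : ℕ := (N + 1) * (N * N)

/-- Size bound for the subgroups `HH`. -/
def DD : ℕ := SB (mSn N) * (EE N) ^ (mSn N)

/-- Size bound for the commutator set in the stopped case. -/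
def MM : ℕ := N ^ N * (N * N) * DD N

lemma SS_small (hN : ∀ g : G, (cls g).Finite ∧ Nat.card (cls g) ≤ N)
    (xs : ℕ → G) {i : ℕ} (hi : i ≤ N + 1) : Small (mSn N) (SS xs i) := by
  have h1 := small_iUnion (fun l : Fin i => rowC_small N hN (xs l))
  refine h1.subset (subset_refl _) ?_
  have : Nat.card (Fin i) = i := by simp [Nat.card_eq_fintype_card]
  rw [this]
  exact Nat.mul_le_mul_right _ hi

lemma HH_small (hN : ∀ g : G, (cls g).Finite ∧ Nat.card (cls g) ≤ N)
    (xs : ℕ → G) {i : ℕ} (hi : i ≤ N + 1) :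
    Finite ↥(HH xs i) ∧ Nat.card ↥(HH xs i) ≤ DD N := by
  obtain ⟨h1, h2⟩ := SS_small N hN xs hi
  exact bd (SS xs i) (mSn N) (EE N) (EE_pos N) h1 h2
    (fun y hy h => SS_conj xs i hy h)
    (fun y hy => by
      obtain ⟨l, hl⟩ := Set.mem_iUnion.mp hy
      exact rowC_pow_eq_one N hN (xs l) y hl)

lemma VV_cc (gs : ℕ → G) : ∀ i, ∀ w ∈ VV gs i, ∀ l, l < i → cc w (gs l) = 1 := by
  intro i
  induction i with
  | zero => intro w _ l hl; omega
  | succ i ih =>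
    intro w hw l hl
    rcases Nat.lt_or_ge l i with h | h
    · exact ih w hw.1 l h
    · have : l = i := by omega
      subst this
      exact mem_centralizer_iff_cc.mp hw.2

lemma VV_finiteIndex (hN : ∀ g : G, (cls g).Finite ∧ Nat.card (cls g) ≤ N)
    (gs : ℕ → G) : ∀ i, (VV gs i).FiniteIndex ∧ (VV gs i).index ≤ N ^ i := by
  intro i
  induction i with
  | zero =>
    have h0 : VV gs 0 = (⊤ : Subgroup G) := rfl
    rw [h0]
    constructor
    · exact ⟨by rw [Subgroup.index_top]; omega⟩
    · rw [Subgroup.index_top]; simp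
  | succ i ih =>
    have h0 : VV gs (i + 1) = VV gs i ⊓ Subgroup.centralizer {gs i} := rfl
    rw [h0]
    haveI := ih.1
    haveI := centralizer_finiteIndex (hN (gs i)).1
    refine ⟨inferInstance, ?_⟩
    refine le_trans Subgroup.index_inf_le ?_
    rw [pow_succ]
    exact Nat.mul_le_mul ih.2 (centralizer_index_le (hN (gs i)).1 (hN (gs i)).2)

end Bounds

/-- A good greedy chain of length `i`. -/
def Good (xs gs : ℕ → G) (i : ℕ) : Prop :=
  (∀ j, j < i → ∀ l, l < j → cc (xs j) (gs l) = 1) ∧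
  (∀ j, j < i → cc (xs j) (gs j) ∉ HH xs j)

/-- Prefix products. -/
def prodTo (xs : ℕ → G) : ℕ → G
  | 0 => 1
  | j + 1 => prodTo xs j * xs j

/-- Partial products from index `a` (inclusive) to `b` (exclusive). -/
def mid (xs : ℕ → G) (a : ℕ) : ℕ → G
  | 0 => 1
  | b + 1 => if a ≤ b then mid xs a b * xs b else 1

lemma prodTo_split (xs : ℕ → G) {a b : ℕ} (hab : a ≤ b) :
    prodTo xs b = prodTo xs a * mid xs a b := by
  induction b with
  | zero =>
    have : a = 0 := by omega
    subst this
    simp [mid]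
  | succ b ih =>
    rcases Nat.lt_or_ge b a with h | h
    · have : a = b + 1 := by omega
      subst this
      show prodTo xs (b+1) = prodTo xs (b+1) * mid xs (b+1) (b+1)
      have hm : mid xs (b+1) (b+1) = 1 := by
        show (if b + 1 ≤ b then mid xs (b+1) b * xs b else 1) = 1
        rw [if_neg (by omega)]
      rw [hm, mul_one]
    · have hm : mid xs a (b+1) = mid xs a b * xs b := by
        show (if a ≤ b then mid xs a b * xs b else 1) = mid xs a b * xs b
        rw [if_pos h]
      show prodTo xs b * xs b = prodTo xs a * mid xs a (b+1)
      rw [ih h, hm, mul_assoc]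

lemma mid_centralizer (xs : ℕ → G) {a b : ℕ} (g : G)
    (h : ∀ l, a ≤ l → l < b → cc (xs l) g = 1) :
    mid xs a b ∈ Subgroup.centralizer {g} := by
  induction b with
  | zero => exact Subgroup.one_mem _
  | succ b ih =>
    show (if a ≤ b then mid xs a b * xs b else 1) ∈ _
    rcases Nat.lt_or_ge b a with hab | hab
    · rw [if_neg (by omega)]
      exact Subgroup.one_mem _
    · rw [if_pos hab]
      refine Subgroup.mul_mem _ (ih (fun l h1 h2 => h l h1 (by omega))) ?_
      exact mem_centralizer_iff_cc.mpr (h b hab (by omega))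

lemma cc_prodTo_mem (xs : ℕ → G) : ∀ (j : ℕ) (g : G), cc (prodTo xs j) g ∈ HH xs j := by
  intro j
  induction j with
  | zero =>
    intro g
    show cc 1 g ∈ _
    rw [cc_one_left]
    exact Subgroup.one_mem _
  | succ j ih =>
    intro g
    show cc (prodTo xs j * xs j) g ∈ _
    rw [cc_mul_left]
    refine Subgroup.mul_mem _ ?_ ?_
    · exact HH_conj xs (j+1) (SetLike.le_def.mp (HH_mono xs (by omega)) (ih g)) (xs j)
    · exact Subgroup.subset_closure (rowC_subset_SS xs (by omega) (cc_self_mem_rowC (xs j) g))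

/-- No good chain of length `N+1` can exist in an `N`-BFC group. -/
lemma no_good_chain {N : ℕ} (hN : ∀ g : G, (cls g).Finite ∧ Nat.card (cls g) ≤ N)
    (xs gs : ℕ → G) (hg : Good xs gs (N + 1)) : False := by
  set z := prodTo xs (N + 1) with hz
  have hval : ∀ j, j ≤ N → cc z (gs j) =
      (mid xs (j+1) (N+1))⁻¹ * cc (prodTo xs (j+1)) (gs j) * (mid xs (j+1) (N+1)) := by
    intro j hj
    have hsplit : z = prodTo xs (j+1) * mid xs (j+1) (N+1) :=
      prodTo_split xs (by omega)
    have hmid : mid xs (j+1) (N+1) ∈ Subgroup.centralizer {gs j} :=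
      mid_centralizer xs (gs j) (fun l h1 h2 => hg.1 l h2 j (by omega))
    rw [hsplit, cc_mul_left, mem_centralizer_iff_cc.mp hmid, mul_one]
  have hout : ∀ j, j ≤ N → cc z (gs j) ∉ HH xs j := by
    intro j hj hmem
    have h1 : cc (prodTo xs (j+1)) (gs j) ∈ HH xs j := by
      rw [hval j hj] at hmem
      exact HH_conj_rev xs j (mid xs (j+1) (N+1)) hmem
    rw [show prodTo xs (j+1) = prodTo xs j * xs j from rfl, cc_mul_left] at h1
    have h2 : ((xs j)⁻¹ * cc (prodTo xs j) (gs j) * xs j) ∈ HH xs j :=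
      HH_conj xs j (cc_prodTo_mem xs j (gs j)) (xs j)
    have h3 : cc (xs j) (gs j) ∈ HH xs j := by
      have h4 := Subgroup.mul_mem _ (Subgroup.inv_mem _ h2) h1
      rwa [inv_mul_cancel_left] at h4
    exact hg.2 j (by omega) h3
  have hin : ∀ j j', j' < j → j ≤ N → cc z (gs j') ∈ HH xs j := by
    intro j j' hjj hj
    rw [hval j' (by omega)]
    refine HH_conj xs j ?_ _
    exact SetLike.le_def.mp (HH_mono xs (by omega : j' + 1 ≤ j)) (cc_prodTo_mem xs (j'+1) (gs j'))
  have hdist : ∀ j j' : ℕ, j' < j → j ≤ N → cc z (gs j) ≠ cc z (gs j') :=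
    fun j j' h1 h2 hEq => hout j h2 (hEq ▸ hin j j' h1 h2)
  have hinj : Function.Injective
      (fun j : Fin (N+1) => (⟨(gs j)⁻¹ * z * (gs j), conj_mem_cls z (gs j)⟩ : cls z)) := by
    intro j j' hEq
    have hval2 : (gs (j:ℕ))⁻¹ * z * (gs (j:ℕ)) = (gs (j':ℕ))⁻¹ * z * (gs (j':ℕ)) :=
      congrArg Subtype.val hEq
    have hcc : cc z (gs (j:ℕ)) = cc z (gs (j':ℕ)) := by
      unfold cc
      have h5 := congrArg (fun t => z⁻¹ * t) hval2
      simpa [mul_assoc] using h5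
    by_contra hne
    have hne' : (j : ℕ) ≠ (j' : ℕ) := fun h => hne (Fin.ext h)
    rcases Nat.lt_or_ge (j : ℕ) (j' : ℕ) with h | h
    · exact hdist (j' : ℕ) (j : ℕ) h (by omega) hcc.symm
    · have h' : (j' : ℕ) < (j : ℕ) := by omega
      exact hdist (j : ℕ) (j' : ℕ) h' (by omega) hcc
  haveI := (hN z).1.to_subtype
  have hcard : N + 1 ≤ Nat.card (cls z) := by
    calc N + 1 = Nat.card (Fin (N+1)) := by simp [Nat.card_eq_fintype_card]
      _ ≤ Nat.card (cls z) := Nat.card_le_card_of_injective _ hinj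
  have := (hN z).2
  omega

/-- If the greedy process stops, the commutator set is small. -/
lemma stop_case {N : ℕ} (hN : ∀ g : G, (cls g).Finite ∧ Nat.card (cls g) ≤ N)
    (xs gs : ℕ → G) (i : ℕ) (hi : i ≤ N)
    (hstop : ∀ w g : G, w ∈ VV gs i → cc w g ∈ HH xs i) :
    Small (MM N) {y : G | ∃ x g : G, cc x g = y} := by
  haveI hVfin : Finite (G ⧸ VV gs i) :=
    Nat.finite_of_card_ne_zero (VV_finiteIndex N hN gs i).1.index_ne_zero
  have hcover : {y : G | ∃ x g : G, cc x g = y} ⊆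
      Set.image2 (· * ·) (⋃ q : G ⧸ VV gs i, RowC (Quotient.out q))
        ((HH xs i : Set G)) := by
    rintro y ⟨x, g, rfl⟩
    set u := (QuotientGroup.mk x : G ⧸ VV gs i).out with hu
    have huv : u⁻¹ * x ∈ VV gs i := by
      rw [← QuotientGroup.eq]
      exact (QuotientGroup.mk x : G ⧸ VV gs i).out_eq'
    have hxd : x = u * (u⁻¹ * x) := by group
    rw [hxd, cc_mul_left]
    refine Set.mem_image2_of_mem ?_ (hstop _ g huv)
    refine Set.mem_iUnion.mpr ⟨QuotientGroup.mk x, ?_⟩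
    exact rowC_conj (cc_self_mem_rowC u g) (u⁻¹ * x)
  have hUsmall : Small (N ^ N * (N * N)) (⋃ q : G ⧸ VV gs i, RowC (Quotient.out q)) := by
    have h1 := small_iUnion (fun q : G ⧸ VV gs i => rowC_small N hN (Quotient.out q))
    refine h1.subset (subset_refl _) ?_
    have h2 : (VV gs i).index ≤ N ^ i := (VV_finiteIndex N hN gs i).2
    have h3 : N ^ i ≤ N ^ N := by
      rcases Nat.eq_zero_or_pos N with rfl | hNp
      · have : i = 0 := by omega
        rw [this]
      · exact Nat.pow_le_pow_right hNp hi
    have h4 : Nat.card (G ⧸ VV gs i) ≤ N ^ N := le_trans h2 h3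
    exact Nat.mul_le_mul h4 (le_refl _)
  have hHsmall : Small (DD N) ((HH xs i : Set G)) := by
    obtain ⟨hf, hc⟩ := HH_small N hN xs (show i ≤ N + 1 by omega)
    haveI := hf
    exact ⟨(HH xs i : Set G).toFinite, hc⟩
  have h5 := small_image2 (· * ·) hUsmall hHsmall
  exact h5.subset hcover (le_refl _)

/-- The commutator set of an `N`-BFC group is small. -/
theorem commSet_small {N : ℕ} (hN : ∀ g : G, (cls g).Finite ∧ Nat.card (cls g) ≤ N) :
    Small (MM N) {y : G | ∃ x g : G, cc x g = y} := by
  suffices h : ∀ k i (xs gs : ℕ → G), N + 1 ≤ i + k → Good xs gs i →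
      Small (MM N) {y : G | ∃ x g : G, cc x g = y} by
    refine h (N+1) 0 (fun _ => 1) (fun _ => 1) (by omega) ?_
    exact ⟨fun j hj => absurd hj (by omega), fun j hj => absurd hj (by omega)⟩
  intro k
  induction k with
  | zero =>
    intro i xs gs hik hgood
    have hg : Good xs gs (N + 1) :=
      ⟨fun j hj => hgood.1 j (by omega), fun j hj => hgood.2 j (by omega)⟩
    exact absurd hg (fun hg' => no_good_chain hN xs gs hg')
  | succ k ih =>
    intro i xs gs hik hgood
    by_cases hik' : N + 1 ≤ i + k
    · exact ih i xs gs hik' hgood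
    · have hi : i ≤ N := by omega
      by_cases hstop : ∀ w g : G, w ∈ VV gs i → cc w g ∈ HH xs i
      · exact stop_case hN xs gs i hi hstop
      · push_neg at hstop
        obtain ⟨w, g, hwV, hwH⟩ := hstop
        classical
        set xs' := Function.update xs i w with hxs'
        set gs' := Function.update gs i g with hgs'
        have hHeq : ∀ j, j ≤ i → HH xs' j = HH xs j := by
          intro j hj
          unfold HH SS
          congr 1
          refine Set.iUnion_congr ?_
          intro l
          rw [hxs', Function.update_of_ne (by omega : (l : ℕ) ≠ i)]
        have hgood' : Good xs' gs' (i + 1) := by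
          constructor
          · intro j hj l hl
            rcases Nat.lt_or_ge j i with hji | hji
            · rw [hxs', hgs', Function.update_of_ne (by omega : j ≠ i),
                Function.update_of_ne (by omega : l ≠ i)]
              exact hgood.1 j hji l hl
            · have hji' : j = i := by omega
              subst hji'
              rw [hxs', hgs', Function.update_self, Function.update_of_ne (by omega : l ≠ j)]
              exact VV_cc gs j w hwV l hl
          · intro j hj
            rcases Nat.lt_or_ge j i with hji | hji
            · rw [hHeq j (by omega), hxs', hgs', Function.update_of_ne (by omega : j ≠ i),
                Function.update_of_ne (by omega : j ≠ i)]
              exact hgood.2 j hji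
            · have hji' : j = i := by omega
              subst hji'
              rw [hHeq j (le_refl _), hxs', hgs', Function.update_self, Function.update_self]
              exact hwH
        exact ih (i+1) xs' gs' (by omega) hgood'

end Main

end BFCProof

theorem statement17 (N : ℕ) :
    ∃ C : ℕ, ∀ (G : Type u) (_ : Group G),
      (∀ g : G, {x : G | ∃ h : G, h⁻¹ * g * h = x}.Finite ∧
        Nat.card {x : G | ∃ h : G, h⁻¹ * g * h = x} ≤ N) →
      ((commutator G : Set G).Finite ∧ Nat.card ↥(commutator G) ≤ C) := by
  classical
  refine ⟨Subgroup.cardCommutatorBound (BFCProof.MM N), ?_⟩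
  intro G iG hyp
  have hN : ∀ g : G, (BFCProof.cls g).Finite ∧ Nat.card (BFCProof.cls g) ≤ N := hyp
  obtain ⟨hfin, hcard⟩ := BFCProof.commSet_small hN
  have hset : commutatorSet G = {y : G | ∃ x g : G, BFCProof.cc x g = y} := by
    ext y
    constructor
    · rintro ⟨a, b, rfl⟩
      refine ⟨a⁻¹, b⁻¹, ?_⟩
      unfold BFCProof.cc
      rw [commutatorElement_def]
      group
    · rintro ⟨x, g, rfl⟩
      refine ⟨x⁻¹, g⁻¹, ?_⟩
      rw [commutatorElement_def]
      unfold BFCProof.cc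
      group
  haveI hfinCS : Finite (commutatorSet G) := by
    rw [hset]
    exact hfin.to_subtype
  have hcardCS : Nat.card (commutatorSet G) ≤ BFCProof.MM N := by
    rw [hset]
    exact hcard
  haveI hfc : Finite ↥(_root_.commutator G) := inferInstance
  constructor
  · exact Set.toFinite _
  · exact le_trans (Subgroup.card_commutator_le_of_finite_commutatorSet G)
      (BFCProof.ccb_mono hcardCS)
end
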